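/- arXiv:1906.07600 — 3 statements merged into one kernel-verified Lean document; each statement's English description precedes it below -/
import Mathlib

section
/- Let f, g : 2^ω → ℝ be Baire 1 functions. If |f|_α < |g|_α, then f ≤_m g. -/
/-- Cantor space `2^ω`. -/
abbrev Cantor : Type := ℕ → Bool

/-- A bit `b` is a correct answer to the question `f A ≲_ε p`. -/
def CorrectAnswer (f : Cantor → ℝ) (A : Cantor) (p ε : ℚ) (b : Bool) : Prop :=
  (b = true ∧ f A < (p : ℝ) + (ε : ℝ)) ∨ (b = false ∧ (p : ℝ) - (ε : ℝ) < f A)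

/-- Topological m-reducibility `f ≤_m g`. -/
def MReducible (f g : Cantor → ℝ) : Prop :=
  ∀ p ε : ℚ, 0 < ε → ∃ q δ : ℚ, 0 < δ ∧ ∃ k : Cantor → Cantor, Continuous k ∧
    ∀ A b, CorrectAnswer g (k A) q δ b → CorrectAnswer f A p ε b

/-- `f` is Baire class 1: a pointwise limit of continuous functions. -/
def BaireOne (f : Cantor → ℝ) : Prop :=
  ∃ F : ℕ → Cantor → ℝ, (∀ n, Continuous (F n)) ∧
    ∀ A, Filter.Tendsto (fun n => F n A) Filter.atTop (nhds (f A))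

/-- The Bourgain derivation sequence `P^ν_{f,p,ε}`. -/
noncomputable def derivSeq (f : Cantor → ℝ) (p ε : ℚ) (ν : Ordinal.{0}) : Set Cantor :=
  Ordinal.limitRecOn ν Set.univ
    (fun _ P => P \ ⋃₀ {U : Set Cantor | IsOpen U ∧
        (f '' (P ∩ U) ⊆ Set.Iio ((p : ℝ) + (ε : ℝ)) ∨
         f '' (P ∩ U) ⊆ Set.Ioi ((p : ℝ) - (ε : ℝ)))})
    (fun o _ ih => ⋂ (μ : {μ : Ordinal.{0} // μ < o}), ih μ.1 μ.2)

/-- `α(f,p,ε)`: the least ordinal `ν` with `P^ν_{f,p,ε} = ∅`. -/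
noncomputable def bAlpha (f : Cantor → ℝ) (p ε : ℚ) : Ordinal.{0} :=
  sInf {ν | derivSeq f p ε ν = ∅}

/-- The Bourgain rank `|f|_α`. -/
noncomputable def bourgainRank (f : Cantor → ℝ) : Ordinal.{0} :=
  ⨆ x : ℚ × {ε : ℚ // 0 < ε}, bAlpha f x.1 x.2.1

open Set Filter

namespace BourgainAux

lemma derivSeq_zero (f : Cantor → ℝ) (p ε : ℚ) : derivSeq f p ε 0 = Set.univ :=
  Ordinal.limitRecOn_zero _ _ _

lemma derivSeq_succ (f : Cantor → ℝ) (p ε : ℚ) (ν : Ordinal.{0}) :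
    derivSeq f p ε (ν + 1) = derivSeq f p ε ν \ ⋃₀ {U : Set Cantor | IsOpen U ∧
      (f '' (derivSeq f p ε ν ∩ U) ⊆ Set.Iio ((p : ℝ) + (ε : ℝ)) ∨
       f '' (derivSeq f p ε ν ∩ U) ⊆ Set.Ioi ((p : ℝ) - (ε : ℝ)))} := by
  simp only [derivSeq, Ordinal.add_one_eq_succ, Ordinal.limitRecOn_succ]

lemma derivSeq_limit (f : Cantor → ℝ) (p ε : ℚ) {ν : Ordinal.{0}} (hν : Order.IsSuccLimit ν) :
    derivSeq f p ε ν = ⋂ (μ : {μ : Ordinal.{0} // μ < ν}), derivSeq f p ε μ.1 := by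
  simp only [derivSeq, Ordinal.limitRecOn_limit _ _ _ _ hν]

lemma derivSeq_isClosed (f : Cantor → ℝ) (p ε : ℚ) (ν : Ordinal.{0}) :
    IsClosed (derivSeq f p ε ν) := by
  induction ν using Ordinal.limitRecOn with
  | zero => rw [derivSeq_zero]; exact isClosed_univ
  | add_one ν ih =>
      rw [derivSeq_succ]
      exact ih.sdiff (isOpen_sUnion fun U hU => hU.1)
  | limit ν hν ih =>
      rw [derivSeq_limit f p ε hν]
      exact isClosed_iInter fun μ => ih μ.1 μ.2

lemma derivSeq_antitone (f : Cantor → ℝ) (p ε : ℚ) :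
    ∀ ν μ : Ordinal.{0}, μ ≤ ν → derivSeq f p ε ν ⊆ derivSeq f p ε μ := by
  intro ν
  induction ν using Ordinal.limitRecOn with
  | zero => intro μ hμ; rw [nonpos_iff_eq_zero] at hμ; subst hμ; exact subset_rfl
  | add_one ν ih =>
      intro μ hμ
      rcases eq_or_lt_of_le hμ with rfl | hlt
      · exact subset_rfl
      · have h1 : μ ≤ ν := Order.lt_add_one_iff.mp hlt
        have h2 : derivSeq f p ε (Order.succ ν) ⊆ derivSeq f p ε ν := by
          rw [← Ordinal.add_one_eq_succ, derivSeq_succ]; exact diff_subset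
        exact h2.trans (ih μ h1)
  | limit ν hν ih =>
      intro μ hμ
      rcases eq_or_lt_of_le hμ with rfl | hlt
      · exact subset_rfl
      · rw [derivSeq_limit f p ε hν]
        exact iInter_subset (fun μ' : {μ' : Ordinal.{0} // μ' < ν} => derivSeq f p ε μ'.1) ⟨μ, hlt⟩

def gSide (g : Cantor → ℝ) (q δ : ℚ) (sd : Bool) (B : Cantor) : Prop :=
  if sd then g B ≤ (q : ℝ) - (δ : ℝ) else (q : ℝ) + (δ : ℝ) ≤ g B

lemma both_sided {g : Cantor → ℝ} {q δ : ℚ} {μ : Ordinal.{0}} {B : Cantor}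
    (hB : B ∈ derivSeq g q δ (μ + 1)) {N : Set Cantor} (hN : IsOpen N) (hBN : B ∈ N)
    (sd : Bool) : ∃ B', (B' ∈ derivSeq g q δ μ ∩ N) ∧ gSide g q δ sd B' := by
  rw [derivSeq_succ] at hB
  by_contra hcon
  push_neg at hcon
  apply hB.2
  refine ⟨N, ⟨hN, ?_⟩, hBN⟩
  cases sd with
  | true =>
      right
      rintro y ⟨B', hB', rfl⟩
      have := hcon B' hB'
      simp only [gSide, if_true] at this
      exact mem_Ioi.mpr (lt_of_not_ge this)
  | false =>
      left
      rintro y ⟨B', hB', rfl⟩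
      have := hcon B' hB'
      simp only [gSide, if_false] at this
      exact mem_Iio.mpr (lt_of_not_ge this)

/-! ### Cylinders -/

def cyl (n : ℕ) (A : Cantor) : Set Cantor := {B | ∀ i, i < n → B i = A i}

lemma self_mem_cyl (n : ℕ) (A : Cantor) : A ∈ cyl n A := fun _ _ => rfl

lemma cyl_zero (A : Cantor) : cyl 0 A = Set.univ := by
  ext B; simp [cyl]

lemma cyl_anti {n m : ℕ} (h : n ≤ m) (A : Cantor) : cyl m A ⊆ cyl n A :=
  fun B hB i hi => hB i (lt_of_lt_of_le hi h)

lemma cyl_congr {n : ℕ} {A A' : Cantor} (h : ∀ i, i < n → A i = A' i) :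
    cyl n A = cyl n A' := by
  ext B
  constructor <;> intro hB i hi
  · rw [hB i hi]; exact h i hi
  · rw [hB i hi, h i hi]

lemma cyl_eq_biInter (n : ℕ) (A : Cantor) :
    cyl n A = ⋂ i ∈ Finset.range n, {B : Cantor | B i = A i} := by
  ext B; simp [cyl]

lemma isOpen_cyl (n : ℕ) (A : Cantor) : IsOpen (cyl n A) := by
  rw [cyl_eq_biInter]
  refine isOpen_biInter_finset fun i _ => ?_
  have h : {B : Cantor | B i = A i} = (fun B : Cantor => B i) ⁻¹' {A i} := by
    ext B; simp
  rw [h]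
  exact (isOpen_discrete _).preimage (continuous_apply i)

lemma isClosed_cyl (n : ℕ) (A : Cantor) : IsClosed (cyl n A) := by
  rw [cyl_eq_biInter]
  refine isClosed_biInter fun i _ => ?_
  have h : {B : Cantor | B i = A i} = (fun B : Cantor => B i) ⁻¹' {A i} := by
    ext B; simp
  rw [h]
  exact (isClosed_discrete _).preimage (continuous_apply i)

lemma exists_cyl_subset {U : Set Cantor} (hU : IsOpen U) {A : Cantor} (hA : A ∈ U) :
    ∃ n, cyl n A ⊆ U := by
  rcases isOpen_pi_iff.mp hU A hA with ⟨I, u, hu, hsub⟩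
  refine ⟨(I.sup id) + 1, fun B hB => hsub fun i hi => ?_⟩
  have hlt : i < I.sup id + 1 := Nat.lt_succ_of_le (Finset.le_sup (f := id) hi)
  rw [hB i hlt]
  exact (hu i hi).2

end BourgainAux
namespace BourgainAux

/-! ### The Baire category lemma -/

lemma baire_osc {f : Cantor → ℝ} (hf : BaireOne f) {ε : ℚ} (hε : 0 < ε) (p : ℚ)
    {P : Set Cantor} (hP : IsClosed P) (hne : P.Nonempty) :
    ∃ U, IsOpen U ∧ (P ∩ U).Nonempty ∧
      (f '' (P ∩ U) ⊆ Set.Iio ((p : ℝ) + (ε : ℝ)) ∨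
       f '' (P ∩ U) ⊆ Set.Ioi ((p : ℝ) - (ε : ℝ))) := by
  obtain ⟨F, hFc, hFt⟩ := hf
  have hε' : (0 : ℝ) < (ε : ℝ) := by exact_mod_cast hε
  set e : ℝ := (ε : ℝ) / 4 with he
  have he0 : 0 < e := by positivity
  haveI : CompactSpace P := isCompact_iff_compactSpace.mp hP.isCompact
  haveI : Nonempty P := hne.to_subtype
  haveI : BaireSpace P := BaireSpace.of_t2Space_locallyCompactSpace
  set C : ℕ → Set P := fun n => {x | ∀ m, n ≤ m → |F m x.1 - F n x.1| ≤ e} with hC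
  have hCclosed : ∀ n, IsClosed (C n) := by
    intro n
    have h1 : C n = ⋂ m, ⋂ (_ : n ≤ m), {x : P | |F m x.1 - F n x.1| ≤ e} := by
      ext x; simp [hC]
    rw [h1]
    refine isClosed_iInter fun m => isClosed_iInter fun _ => ?_
    exact isClosed_le (((hFc m).comp continuous_subtype_val).sub
      ((hFc n).comp continuous_subtype_val)).abs continuous_const
  have hcover : (⋃ n, C n) = Set.univ := by
    rw [Set.eq_univ_iff_forall]
    intro x
    have := Metric.tendsto_atTop.mp (hFt x.1) (e / 2) (by positivity)
    obtain ⟨N, hN⟩ := this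
    refine Set.mem_iUnion.mpr ⟨N, fun m hm => ?_⟩
    have h1 := hN m hm
    have h2 := hN N le_rfl
    rw [Real.dist_eq] at h1 h2
    have : F m x.1 - F N x.1 = (F m x.1 - f x.1) - (F N x.1 - f x.1) := by ring
    rw [this]
    calc |(F m x.1 - f x.1) - (F N x.1 - f x.1)|
        ≤ |F m x.1 - f x.1| + |F N x.1 - f x.1| := abs_sub _ _
      _ ≤ e := by rw [he]; linarith [abs_sub_comm (F m x.1) (f x.1) ▸ h1]
  obtain ⟨n, hn⟩ := nonempty_interior_of_iUnion_of_closed hCclosed hcover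
  obtain ⟨x0, hx0⟩ := hn
  obtain ⟨W, hWopen, hWeq⟩ := isOpen_induced_iff.mp (isOpen_interior : IsOpen (interior (C n)))
  -- bound |f x - F n x| ≤ e on C n
  have hfb : ∀ x : P, x ∈ C n → |f x.1 - F n x.1| ≤ e := by
    intro x hx
    have ht : Filter.Tendsto (fun m => |F m x.1 - F n x.1|) Filter.atTop
        (nhds |f x.1 - F n x.1|) := ((hFt x.1).sub tendsto_const_nhds).abs
    exact le_of_tendsto ht (Filter.eventually_atTop.mpr ⟨n, fun m hm => hx m hm⟩)
  -- continuity of F n at x0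
  set W' : Set Cantor := (F n) ⁻¹' (Metric.ball (F n x0.1) e) with hW'
  have hW'open : IsOpen W' := (Metric.isOpen_ball).preimage (hFc n)
  have hx0W' : x0.1 ∈ W' := by
    simp [hW', Metric.mem_ball, dist_self, he0]
  have hx0W : x0.1 ∈ W := by
    have : x0 ∈ (Subtype.val ⁻¹' W : Set P) := hWeq ▸ hx0
    exact this
  refine ⟨W ∩ W', hWopen.inter hW'open, ⟨x0.1, x0.2, hx0W, hx0W'⟩, ?_⟩
  -- oscillation bound
  have hosc : ∀ x ∈ P ∩ (W ∩ W'), |f x - f x0.1| ≤ 3 * e := by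
    rintro x ⟨hxP, hxW, hxW'⟩
    have hxC : (⟨x, hxP⟩ : P) ∈ C n := by
      have : (⟨x, hxP⟩ : P) ∈ (Subtype.val ⁻¹' W : Set P) := hxW
      exact interior_subset (hWeq ▸ this)
    have h1 : |f x - F n x| ≤ e := hfb ⟨x, hxP⟩ hxC
    have hx0C : x0 ∈ C n := interior_subset hx0
    have h2 : |f x0.1 - F n x0.1| ≤ e := hfb x0 hx0C
    have h3 : |F n x - F n x0.1| ≤ e := by
      have := hxW'
      simp only [hW', Set.mem_preimage, Metric.mem_ball, Real.dist_eq] at this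
      linarith [this]
    calc |f x - f x0.1| = |(f x - F n x) + (F n x - F n x0.1) + (F n x0.1 - f x0.1)| := by
          ring_nf
      _ ≤ |f x - F n x| + |F n x - F n x0.1| + |F n x0.1 - f x0.1| := by
          refine (abs_add_le _ _).trans ?_
          gcongr
          exact abs_add_le _ _
      _ ≤ 3 * e := by rw [abs_sub_comm (F n x0.1)]; linarith
  rcases le_or_gt (f x0.1) p with hc | hc
  · left
    rintro y ⟨x, hx, rfl⟩
    have := hosc x hx
    have habs := abs_le.mp this
    simp only [Set.mem_Iio]
    have : 3 * e < (ε : ℝ) := by rw [he]; linarith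
    linarith [habs.2]
  · right
    rintro y ⟨x, hx, rfl⟩
    have := hosc x hx
    have habs := abs_le.mp this
    simp only [Set.mem_Ioi]
    have : 3 * e < (ε : ℝ) := by rw [he]; linarith
    linarith [habs.1]

lemma exists_derivSeq_empty {f : Cantor → ℝ} (hf : BaireOne f) {ε : ℚ} (hε : 0 < ε)
    (p : ℚ) : ∃ ν : Ordinal.{0}, derivSeq f p ε ν = ∅ := by
  by_contra hcon
  push_neg at hcon
  have hne : ∀ ν, (derivSeq f p ε ν).Nonempty := hcon
  have key : ∀ ν : Ordinal.{0}, ∃ x, x ∈ derivSeq f p ε ν ∧ x ∉ derivSeq f p ε (ν + 1) := by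
    intro ν
    obtain ⟨U, hUo, hUne, hside⟩ := baire_osc hf hε p (derivSeq_isClosed f p ε ν) (hne ν)
    obtain ⟨x, hx⟩ := hUne
    refine ⟨x, hx.1, ?_⟩
    rw [derivSeq_succ]
    rintro ⟨-, hx2⟩
    exact hx2 ⟨U, ⟨hUo, hside⟩, hx.2⟩
  choose x hx1 hx2 using key
  have hinj : Function.Injective x := by
    intro ν μ hxy
    by_contra hne'
    rcases lt_or_gt_of_ne hne' with hlt | hlt
    · exact hx2 ν (hxy ▸ derivSeq_antitone f p ε μ (ν + 1) (Order.add_one_le_iff.mpr hlt) (hx1 μ))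
    · exact hx2 μ (hxy ▸ derivSeq_antitone f p ε ν (μ + 1) (Order.add_one_le_iff.mpr hlt) (hx1 ν))
  exact not_small_ordinal.{0} (small_of_injective hinj)

/-! ### Cylinder ranks -/

noncomputable def mRankC (f : Cantor → ℝ) (p ε : ℚ) (c : Set Cantor) : Ordinal.{0} :=
  sInf {ν | c ∩ derivSeq f p ε (ν + 1) = ∅}

lemma mRankC_set_nonempty {f : Cantor → ℝ} {p ε : ℚ}
    (hex : ∃ ν : Ordinal.{0}, derivSeq f p ε ν = ∅) (c : Set Cantor) :
    {ν : Ordinal.{0} | c ∩ derivSeq f p ε (ν + 1) = ∅}.Nonempty := by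
  obtain ⟨τ, hτ⟩ := hex
  refine ⟨τ, ?_⟩
  have h1 : derivSeq f p ε (τ + 1) ⊆ derivSeq f p ε τ :=
    derivSeq_antitone f p ε (τ + 1) τ (Order.le_succ τ)
  rw [Set.mem_setOf]
  rw [hτ] at h1
  exact Set.eq_empty_of_subset_empty (fun x hx => h1 hx.2)

lemma mRankC_empty {f : Cantor → ℝ} {p ε : ℚ}
    (hex : ∃ ν : Ordinal.{0}, derivSeq f p ε ν = ∅) (c : Set Cantor) :
    c ∩ derivSeq f p ε (mRankC f p ε c + 1) = ∅ :=
  csInf_mem (mRankC_set_nonempty hex c)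

lemma mRankC_mono {f : Cantor → ℝ} {p ε : ℚ}
    (hex : ∃ ν : Ordinal.{0}, derivSeq f p ε ν = ∅) {c c' : Set Cantor} (hsub : c' ⊆ c) :
    mRankC f p ε c' ≤ mRankC f p ε c := by
  refine csInf_le_csInf (OrderBot.bddBelow _) (mRankC_set_nonempty hex c) ?_
  intro ν hν
  rw [Set.mem_setOf] at hν ⊢
  exact Set.eq_empty_of_subset_empty (hν ▸ Set.inter_subset_inter_left _ hsub)

lemma mRankC_nonempty {f : Cantor → ℝ} {p ε : ℚ}
    (hex : ∃ ν : Ordinal.{0}, derivSeq f p ε ν = ∅) {c : Set Cantor} (hc : IsClosed c)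
    (hcne : c.Nonempty) : (c ∩ derivSeq f p ε (mRankC f p ε c)).Nonempty := by
  by_contra hE
  rw [Set.not_nonempty_iff_eq_empty] at hE
  set m := mRankC f p ε c with hm
  rcases Ordinal.zero_or_succ_or_isSuccLimit m with h0 | ⟨ν, hν⟩ | hlim
  · rw [h0, derivSeq_zero, Set.inter_univ] at hE
    exact hcne.ne_empty hE
  · have hν' : m = ν + 1 := by rw [← hν, Ordinal.add_one_eq_succ]
    have : ν ∈ {ν : Ordinal.{0} | c ∩ derivSeq f p ε (ν + 1) = ∅} := by
      rw [Set.mem_setOf, ← hν']; exact hE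
    have hle : m ≤ ν := csInf_le (OrderBot.bddBelow _) this
    rw [hν'] at hle
    exact absurd hle (not_le.mpr (Order.lt_add_one_iff.mpr le_rfl))
  · haveI : Nonempty {μ : Ordinal.{0} // μ < m} := ⟨⟨0, hlim.pos⟩⟩
    have hint : c ∩ derivSeq f p ε m =
        ⋂ (μ : {μ : Ordinal.{0} // μ < m}), (c ∩ derivSeq f p ε μ.1) := by
      rw [derivSeq_limit f p ε hlim, Set.inter_iInter]
    have hdir : Directed (· ⊇ ·) (fun μ : {μ : Ordinal.{0} // μ < m} =>
        c ∩ derivSeq f p ε μ.1) := by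
      intro i j
      rcases le_total i.1 j.1 with hij | hij
      · exact ⟨j, Set.inter_subset_inter_right _ (derivSeq_antitone f p ε j.1 i.1 hij),
          subset_rfl⟩
      · exact ⟨i, subset_rfl,
          Set.inter_subset_inter_right _ (derivSeq_antitone f p ε i.1 j.1 hij)⟩
    have hnon : ∀ μ : {μ : Ordinal.{0} // μ < m}, (c ∩ derivSeq f p ε μ.1).Nonempty := by
      intro μ
      have h1 : μ.1 ∉ {ν : Ordinal.{0} | c ∩ derivSeq f p ε (ν + 1) = ∅} :=
        notMem_of_lt_csInf' μ.2
      rw [Set.mem_setOf] at h1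
      have h2 := Set.nonempty_iff_ne_empty.mpr h1
      exact h2.mono (Set.inter_subset_inter_right _
        (derivSeq_antitone f p ε (μ.1 + 1) μ.1 (Order.le_succ _)))
    have := IsCompact.nonempty_iInter_of_directed_nonempty_isCompact_isClosed
      (fun μ : {μ : Ordinal.{0} // μ < m} => c ∩ derivSeq f p ε μ.1) hdir hnon
      (fun μ => (hc.inter (derivSeq_isClosed f p ε μ.1)).isCompact)
      (fun μ => hc.inter (derivSeq_isClosed f p ε μ.1))
    rw [← hint, hE] at this
    exact this.ne_empty rfl

def sidedC (f : Cantor → ℝ) (p ε : ℚ) (c : Set Cantor) (sd : Bool) : Prop :=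
  f '' (c ∩ derivSeq f p ε (mRankC f p ε c)) ⊆
    (if sd then Set.Iio ((p : ℝ) + (ε : ℝ)) else Set.Ioi ((p : ℝ) - (ε : ℝ)))

lemma sidedC_mono {f : Cantor → ℝ} {p ε : ℚ} {c c' : Set Cantor} (hsub : c' ⊆ c)
    (hm : mRankC f p ε c' = mRankC f p ε c) {sd : Bool} (h : sidedC f p ε c sd) :
    sidedC f p ε c' sd := by
  unfold sidedC at h ⊢
  rw [hm]
  exact (Set.image_mono (f := f) (Set.inter_subset_inter_left _ hsub)).trans h

/-! ### Point rank -/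

noncomputable def ptRank (f : Cantor → ℝ) (p ε : ℚ) (A : Cantor) : Ordinal.{0} :=
  sInf {ν | A ∉ derivSeq f p ε (ν + 1)}

lemma ptRank_set_nonempty {f : Cantor → ℝ} {p ε : ℚ}
    (hex : ∃ ν : Ordinal.{0}, derivSeq f p ε ν = ∅) (A : Cantor) :
    {ν : Ordinal.{0} | A ∉ derivSeq f p ε (ν + 1)}.Nonempty := by
  obtain ⟨τ, hτ⟩ := hex
  refine ⟨τ, fun hmem => ?_⟩
  have := derivSeq_antitone f p ε (τ + 1) τ (Order.le_succ τ) hmem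
  rw [hτ] at this
  exact this

lemma ptRank_notmem {f : Cantor → ℝ} {p ε : ℚ}
    (hex : ∃ ν : Ordinal.{0}, derivSeq f p ε ν = ∅) (A : Cantor) :
    A ∉ derivSeq f p ε (ptRank f p ε A + 1) :=
  csInf_mem (ptRank_set_nonempty hex A)

lemma ptRank_mem {f : Cantor → ℝ} {p ε : ℚ} (A : Cantor) :
    A ∈ derivSeq f p ε (ptRank f p ε A) := by
  set ρ := ptRank f p ε A with hρ
  rcases Ordinal.zero_or_succ_or_isSuccLimit ρ with h0 | ⟨ν, hν⟩ | hlim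
  · rw [h0, derivSeq_zero]; exact Set.mem_univ A
  · have hν' : ρ = ν + 1 := by rw [← hν, Ordinal.add_one_eq_succ]
    have h1 : ν ∉ {ν : Ordinal.{0} | A ∉ derivSeq f p ε (ν + 1)} := by
      apply notMem_of_lt_csInf'
      show ν < ρ
      rw [hν']
      exact Order.lt_add_one_iff.mpr le_rfl
    rw [Set.mem_setOf, not_not] at h1
    rw [hν']
    exact h1
  · rw [derivSeq_limit f p ε hlim]
    refine Set.mem_iInter.mpr fun μ => ?_
    have h1 : μ.1 ∉ {ν : Ordinal.{0} | A ∉ derivSeq f p ε (ν + 1)} :=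
      notMem_of_lt_csInf' μ.2
    rw [Set.mem_setOf, not_not] at h1
    exact derivSeq_antitone f p ε (μ.1 + 1) μ.1 (Order.le_succ _) h1

lemma ptRank_mem_le {f : Cantor → ℝ} {p ε : ℚ} (A : Cantor) {s : Ordinal.{0}}
    (hs : s ≤ ptRank f p ε A) : A ∈ derivSeq f p ε s :=
  derivSeq_antitone f p ε _ _ hs (ptRank_mem A)

/-! ### Eventual resolution along a branch -/

lemma eventually_resolved {f : Cantor → ℝ} {p ε : ℚ}
    (hex : ∃ ν : Ordinal.{0}, derivSeq f p ε ν = ∅) (A : Cantor) :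
    ∃ (n0 : ℕ) (sd0 : Bool), ∀ n, n0 ≤ n →
      mRankC f p ε (cyl n A) = ptRank f p ε A ∧ sidedC f p ε (cyl n A) sd0 := by
  set ρ := ptRank f p ε A with hρdef
  have hmem := ptRank_mem (f := f) (p := p) (ε := ε) A
  have hnot := ptRank_notmem hex A
  have hU : A ∈ ⋃₀ {U : Set Cantor | IsOpen U ∧
      (f '' (derivSeq f p ε ρ ∩ U) ⊆ Set.Iio ((p : ℝ) + (ε : ℝ)) ∨
       f '' (derivSeq f p ε ρ ∩ U) ⊆ Set.Ioi ((p : ℝ) - (ε : ℝ)))} := by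
    by_contra hcon
    exact hnot ((derivSeq_succ f p ε ρ) ▸ ⟨hmem, hcon⟩)
  obtain ⟨U, ⟨hUo, hUside⟩, hAU⟩ := hU
  obtain ⟨sd0, hside⟩ : ∃ sd0 : Bool, f '' (derivSeq f p ε ρ ∩ U) ⊆
      (if sd0 then Set.Iio ((p : ℝ) + (ε : ℝ)) else Set.Ioi ((p : ℝ) - (ε : ℝ))) := by
    rcases hUside with h | h
    · exact ⟨true, by simpa using h⟩
    · exact ⟨false, by simpa using h⟩
  obtain ⟨n1, hn1⟩ := exists_cyl_subset hUo hAU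
  obtain ⟨n2, hn2⟩ := exists_cyl_subset (derivSeq_isClosed f p ε (ρ + 1)).isOpen_compl hnot
  refine ⟨max n1 n2, sd0, fun n hn => ?_⟩
  have hsub1 : cyl n A ⊆ U :=
    (cyl_anti (le_trans (le_max_left n1 n2) hn) A).trans hn1
  have hsub2 : cyl n A ∩ derivSeq f p ε (ρ + 1) = ∅ := by
    apply Set.eq_empty_of_subset_empty
    rintro x ⟨hx1, hx2⟩
    exact (cyl_anti (le_trans (le_max_right n1 n2) hn) A).trans hn2 hx1 hx2
  have hmr : mRankC f p ε (cyl n A) = ρ := by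
    apply le_antisymm
    · exact csInf_le (OrderBot.bddBelow _) hsub2
    · by_contra hlt
      push_neg at hlt
      have h1 : mRankC f p ε (cyl n A) + 1 ≤ ρ := Order.add_one_le_iff.mpr hlt
      have h2 : A ∈ derivSeq f p ε (mRankC f p ε (cyl n A) + 1) := ptRank_mem_le A h1
      have h3 := mRankC_empty hex (cyl n A)
      exact absurd h3 (Set.nonempty_iff_ne_empty.mp ⟨A, self_mem_cyl n A, h2⟩)
  refine ⟨hmr, ?_⟩
  unfold sidedC
  rw [hmr]
  refine (Set.image_mono (f := f) ?_).trans hside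
  rintro x ⟨hx1, hx2⟩
  exact ⟨hx2, hsub1 hx1⟩

end BourgainAux
namespace BourgainAux

/-! ### The state machine -/

structure MSt where
  B : Cantor
  e : Ordinal.{0}
  mode : Option Bool

open Classical in
noncomputable def mStep (g : Cantor → ℝ) (q δ : ℚ) (n : ℕ) (m' : Ordinal.{0})
    (sid : Bool → Prop) (s : MSt) : MSt :=
  if ∃ sd, s.mode = some sd ∧ sid sd ∧ m' ≤ s.e then s
  else if ∃ sd : Bool, sid sd then
    let sd : Bool := if sid true then true else false
    if h3 : ∃ B', (B' ∈ derivSeq g q δ m' ∩ cyl n s.B) ∧ gSide g q δ sd B' then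
      ⟨h3.choose, m', some sd⟩
    else s
  else ⟨s.B, s.e, none⟩

open Classical in
noncomputable def mInit (g : Cantor → ℝ) (q δ : ℚ) (e0 : Ordinal.{0}) : MSt :=
  ⟨if h : ∃ B, B ∈ derivSeq g q δ e0 then h.choose else (fun _ => false), e0, none⟩

noncomputable def stSeq (f g : Cantor → ℝ) (p ε q δ : ℚ) : ℕ → Cantor → MSt
  | 0, _ => mInit g q δ (mRankC f p ε Set.univ + 1)
  | (n + 1), A => mStep g q δ n (mRankC f p ε (cyl (n + 1) A))
      (fun sd => sidedC f p ε (cyl (n + 1) A) sd) (stSeq f g p ε q δ n A)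

lemma stSeq_local (f g : Cantor → ℝ) (p ε q δ : ℚ) :
    ∀ (n : ℕ) (A A' : Cantor), (∀ i, i < n → A i = A' i) →
      stSeq f g p ε q δ n A = stSeq f g p ε q δ n A' := by
  intro n
  induction n with
  | zero => intro A A' _; rfl
  | succ n ih =>
      intro A A' hagree
      have hc : cyl (n + 1) A = cyl (n + 1) A' := cyl_congr hagree
      simp only [stSeq]
      rw [hc, ih A A' (fun i hi => hagree i (Nat.lt_succ_of_lt hi))]

noncomputable def kFun (f g : Cantor → ℝ) (p ε q δ : ℚ) (A : Cantor) : Cantor :=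
  fun i => (stSeq f g p ε q δ (i + 1) A).B i

lemma kFun_continuous (f g : Cantor → ℝ) (p ε q δ : ℚ) :
    Continuous (kFun f g p ε q δ) := by
  apply continuous_pi
  intro i
  have heq : (fun A => (stSeq f g p ε q δ (i + 1) A).B i) =
      (fun v : Fin (i + 1) → Bool =>
        (stSeq f g p ε q δ (i + 1) (fun j => if h : j < i + 1 then v ⟨j, h⟩ else false)).B i) ∘
      (fun (A : Cantor) (j : Fin (i + 1)) => A j.1) := by
    funext A
    simp only [Function.comp]
    congr 1
    apply stSeq_local
    intro j hj
    simp [hj]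
  show Continuous (fun A => (stSeq f g p ε q δ (i + 1) A).B i)
  rw [heq]
  exact (continuous_of_discreteTopology).comp (continuous_pi fun j => continuous_apply j.1)

/-! ### The invariant -/

def mInv (f g : Cantor → ℝ) (p ε q δ : ℚ) (n : ℕ) (A : Cantor) (s : MSt) : Prop :=
  s.B ∈ derivSeq g q δ s.e ∧
  (s.mode = none → mRankC f p ε (cyl n A) + 1 ≤ s.e) ∧
  (∀ sd, s.mode = some sd → mRankC f p ε (cyl n A) ≤ s.e ∧
    sidedC f p ε (cyl n A) sd ∧ gSide g q δ sd s.B)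

lemma mStep_spec {f g : Cantor → ℝ} {p ε q δ : ℚ}
    (hexf : ∃ ν : Ordinal.{0}, derivSeq f p ε ν = ∅) (n : ℕ) (A : Cantor) (s : MSt)
    (hs : mInv f g p ε q δ n A s) :
    mInv f g p ε q δ (n + 1) A
      (mStep g q δ n (mRankC f p ε (cyl (n + 1) A))
        (fun sd => sidedC f p ε (cyl (n + 1) A) sd) s) ∧
    (∀ i, i < n → (mStep g q δ n (mRankC f p ε (cyl (n + 1) A))
        (fun sd => sidedC f p ε (cyl (n + 1) A) sd) s).B i = s.B i) ∧
    ((∃ sd, sidedC f p ε (cyl (n + 1) A) sd) →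
      ∃ sd, (mStep g q δ n (mRankC f p ε (cyl (n + 1) A))
        (fun sd => sidedC f p ε (cyl (n + 1) A) sd) s).mode = some sd) ∧
    (∀ sd, s.mode = some sd → sidedC f p ε (cyl (n + 1) A) sd →
      mRankC f p ε (cyl (n + 1) A) ≤ s.e →
      (mStep g q δ n (mRankC f p ε (cyl (n + 1) A))
        (fun sd => sidedC f p ε (cyl (n + 1) A) sd) s) = s) := by
  classical
  set m' := mRankC f p ε (cyl (n + 1) A) with hm'
  set sid : Bool → Prop := fun sd => sidedC f p ε (cyl (n + 1) A) sd with hsiddef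
  set mn := mRankC f p ε (cyl n A) with hmn
  have hm'le : m' ≤ mn := mRankC_mono hexf (cyl_anti (Nat.le_succ n) A)
  -- key: if previously matched with side sd0 but (n+1)-cylinder is not sd0-sided, rank dropped
  have hkey : ∀ sd0, s.mode = some sd0 → ¬ sid sd0 → m' + 1 ≤ s.e := by
    intro sd0 hmode hnsid
    obtain ⟨hle, hsided, -⟩ := hs.2.2 sd0 hmode
    have hne : m' ≠ mn := by
      intro heq
      exact hnsid (sidedC_mono (cyl_anti (Nat.le_succ n) A) (hm' ▸ hmn ▸ heq) hsided)
    have : m' + 1 ≤ mn := Order.add_one_le_iff.mpr (lt_of_le_of_ne hm'le hne)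
    exact this.trans hle
  have hm'1 : s.mode = none → m' + 1 ≤ s.e := by
    intro hmode
    have := hs.2.1 hmode
    exact (add_le_add_left hm'le 1).trans this
  by_cases h1 : ∃ sd, s.mode = some sd ∧ sid sd ∧ m' ≤ s.e
  · rw [mStep, if_pos h1]
    obtain ⟨sd, hmode, hsid, hle⟩ := h1
    refine ⟨⟨hs.1, ?_, ?_⟩, fun i _ => rfl, fun _ => ⟨sd, hmode⟩, fun _ _ _ _ => rfl⟩
    · intro hnone; rw [hmode] at hnone; exact absurd hnone (by simp)
    · intro sd' hmode'
      rw [hmode] at hmode'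
      obtain rfl : sd = sd' := Option.some.inj hmode'
      exact ⟨hle, hsid, (hs.2.2 sd hmode).2.2⟩
  · have hm'1e : m' + 1 ≤ s.e := by
      rcases hmode : s.mode with _ | sd0
      · exact hm'1 hmode
      · apply hkey sd0 hmode
        intro hsid
        by_cases hle : m' ≤ s.e
        · exact h1 ⟨sd0, hmode, hsid, hle⟩
        · obtain ⟨hle', -, -⟩ := hs.2.2 sd0 hmode
          exact hle (hm'le.trans hle')
    have hBE : s.B ∈ derivSeq g q δ (m' + 1) :=
      derivSeq_antitone g q δ _ _ hm'1e hs.1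
    by_cases h2 : ∃ sd : Bool, sid sd
    · set sd : Bool := if sid true then true else false with hsd
      have hsidsd : sid sd := by
        by_cases ht : sid true
        · simpa [hsd, ht] using ht
        · rcases h2 with ⟨sd', hsd'⟩
          have : sd' = false := by
            cases sd'
            · rfl
            · exact absurd hsd' ht
          rw [this] at hsd'
          simpa [hsd, ht] using hsd'
      have h3 : ∃ B', (B' ∈ derivSeq g q δ m' ∩ cyl n s.B) ∧ gSide g q δ sd B' :=
        both_sided hBE (isOpen_cyl n s.B) (self_mem_cyl n s.B) sd
      rw [mStep, if_neg h1, if_pos h2, dif_pos h3]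
      obtain ⟨hB'mem, hB'side⟩ := h3.choose_spec
      refine ⟨⟨hB'mem.1, ?_, ?_⟩, fun i hi => hB'mem.2 i hi, fun _ => ⟨sd, rfl⟩, ?_⟩
      · intro hnone; exact absurd hnone (by simp)
      · intro sd' hmode'
        obtain rfl : sd = sd' := Option.some.inj hmode'
        exact ⟨le_rfl, hsidsd, hB'side⟩
      · intro sd' hmode' hsid' hle'
        exact absurd ⟨sd', hmode', hsid', hle'⟩ h1
    · rw [mStep, if_neg h1, if_neg h2]
      refine ⟨⟨hs.1, fun _ => hm'1e, ?_⟩, fun i _ => rfl, ?_, ?_⟩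
      · intro sd hmode; exact absurd hmode (by simp)
      · intro hsd; exact absurd hsd h2
      · intro sd' hmode' hsid' _
        exact absurd ⟨sd', hsid'⟩ h2

lemma stSeq_inv {f g : Cantor → ℝ} {p ε q δ : ℚ}
    (hexf : ∃ ν : Ordinal.{0}, derivSeq f p ε ν = ∅)
    (hinit : (derivSeq g q δ (mRankC f p ε Set.univ + 1)).Nonempty) :
    ∀ (n : ℕ) (A : Cantor), mInv f g p ε q δ n A (stSeq f g p ε q δ n A) := by
  intro n A
  induction n with
  | zero =>
      classical
      have hex : ∃ B, B ∈ derivSeq g q δ (mRankC f p ε Set.univ + 1) := hinit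
      refine ⟨?_, ?_, ?_⟩
      · show (mInit g q δ (mRankC f p ε Set.univ + 1)).B ∈ _
        rw [mInit]
        simp only [dif_pos hex]
        exact hex.choose_spec
      · intro _
        show mRankC f p ε (cyl 0 A) + 1 ≤ mRankC f p ε Set.univ + 1
        rw [cyl_zero]
      · intro sd hmode
        exact absurd hmode (by simp [mInit, stSeq])
  | succ n ih =>
      exact (mStep_spec hexf n A (stSeq f g p ε q δ n A) ih).1

lemma stSeq_prefix {f g : Cantor → ℝ} {p ε q δ : ℚ}
    (hexf : ∃ ν : Ordinal.{0}, derivSeq f p ε ν = ∅)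
    (hinit : (derivSeq g q δ (mRankC f p ε Set.univ + 1)).Nonempty) :
    ∀ (n : ℕ) (A : Cantor) (i : ℕ), i < n →
      (stSeq f g p ε q δ n A).B i = (stSeq f g p ε q δ (i + 1) A).B i := by
  intro n
  induction n with
  | zero => intro A i hi; exact absurd hi (Nat.not_lt_zero i)
  | succ n ih =>
      intro A i hi
      rcases Nat.lt_succ_iff_lt_or_eq.mp hi with hi' | rfl
      · have hstep := (mStep_spec hexf n A (stSeq f g p ε q δ n A) (stSeq_inv hexf hinit n A)).2.1
        show (mStep g q δ n _ _ (stSeq f g p ε q δ n A)).B i = _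
        rw [hstep i hi']
        exact ih A i hi'
      · rfl

end BourgainAux
namespace BourgainAux

lemma kFun_spec {f g : Cantor → ℝ} {p ε q δ : ℚ}
    (hexf : ∃ ν : Ordinal.{0}, derivSeq f p ε ν = ∅)
    (hinit : (derivSeq g q δ (mRankC f p ε Set.univ + 1)).Nonempty) (A : Cantor) :
    ∃ sd : Bool, gSide g q δ sd (kFun f g p ε q δ A) ∧
      (if sd then f A < (p : ℝ) + (ε : ℝ) else (p : ℝ) - (ε : ℝ) < f A) := by
  obtain ⟨n0, sd0, hres⟩ := eventually_resolved hexf A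
  set N := n0 + 1 with hN
  set sN := stSeq f g p ε q δ N A with hsN
  have hinvN : mInv f g p ε q δ N A sN := stSeq_inv hexf hinit N A
  -- the state at stage N is matched
  have hmodeN : ∃ sd, sN.mode = some sd := by
    have hstep := (mStep_spec hexf n0 A (stSeq f g p ε q δ n0 A)
      (stSeq_inv hexf hinit n0 A)).2.2.1
    exact hstep ⟨sd0, (hres (n0 + 1) (Nat.le_succ n0)).2⟩
  obtain ⟨sdN, hsdN⟩ := hmodeN
  -- the state is constant from stage N on
  have hconst : ∀ n, N ≤ n → stSeq f g p ε q δ n A = sN := by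
    intro n hn
    induction n with
    | zero => exact absurd hn (by omega)
    | succ n ih =>
        rcases Nat.lt_or_ge n N with hlt | hge
        · have : N = n + 1 := by omega
          rw [← this]
        · have heq := ih hge
          have hinvn : mInv f g p ε q δ n A (stSeq f g p ε q δ n A) :=
            stSeq_inv hexf hinit n A
          have hstep := (mStep_spec hexf n A (stSeq f g p ε q δ n A) hinvn).2.2.2
          have hmode : (stSeq f g p ε q δ n A).mode = some sdN := by rw [heq]; exact hsdN
          obtain ⟨hle, hsided, -⟩ := hinvn.2.2 sdN hmode
          have hrn := hres n (by omega)
          have hrn1 := hres (n + 1) (by omega)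
          have hmeq : mRankC f p ε (cyl (n + 1) A) = mRankC f p ε (cyl n A) := by
            rw [hrn1.1, hrn.1]
          have hsided1 : sidedC f p ε (cyl (n + 1) A) sdN :=
            sidedC_mono (cyl_anti (Nat.le_succ n) A) hmeq hsided
          have hle1 : mRankC f p ε (cyl (n + 1) A) ≤ (stSeq f g p ε q δ n A).e := by
            rw [hmeq]; exact hle
          have := hstep sdN hmode hsided1 hle1
          show mStep g q δ n _ _ (stSeq f g p ε q δ n A) = sN
          rw [this, heq]
  -- k A equals the target point of the final state
  have hkA : kFun f g p ε q δ A = sN.B := by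
    funext i
    set M := max (i + 1) N with hM
    have h1 : (stSeq f g p ε q δ M A).B i = (stSeq f g p ε q δ (i + 1) A).B i := by
      rcases Nat.lt_or_ge i M with hi | hi
      · exact stSeq_prefix hexf hinit M A i (by omega)
      · omega
    have h2 : stSeq f g p ε q δ M A = sN := hconst M (le_max_right _ _)
    show (stSeq f g p ε q δ (i + 1) A).B i = sN.B i
    rw [← h1, h2]
  obtain ⟨-, hsided, hgside⟩ := hinvN.2.2 sdN hsdN
  refine ⟨sdN, by rw [hkA]; exact hgside, ?_⟩
  -- f A lies on the correct side
  have hAmem : A ∈ cyl N A ∩ derivSeq f p ε (mRankC f p ε (cyl N A)) := by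
    refine ⟨self_mem_cyl N A, ?_⟩
    rw [(hres N (by omega)).1]
    exact ptRank_mem A
  have := hsided ⟨A, hAmem, rfl⟩
  cases sdN
  · simpa using this
  · simpa using this

end BourgainAux


/-- If `f, g` are Baire 1 functions on Cantor space and `|f|_α < |g|_α`, then `f ≤_m g`. -/
theorem bourgainRank_lt_imp_mReducible (f g : Cantor → ℝ) (hf : BaireOne f) (hg : BaireOne g)
    (h : bourgainRank f < bourgainRank g) : MReducible f g := by
  intro p ε hε
  haveI : Nonempty (ℚ × {ε : ℚ // 0 < ε}) := ⟨⟨0, ⟨1, one_pos⟩⟩⟩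
  have hb : ∃ x : ℚ × {ε : ℚ // 0 < ε}, bourgainRank f < bAlpha g x.1 x.2.1 := by
    by_contra hc
    push_neg at hc
    have : bourgainRank g ≤ bourgainRank f := ciSup_le hc
    exact absurd h (not_lt.mpr this)
  obtain ⟨⟨q, δ, hδ⟩, hqδ⟩ := hb
  have hexf : ∃ ν : Ordinal.{0}, derivSeq f p ε ν = ∅ :=
    BourgainAux.exists_derivSeq_empty hf hε p
  set a : Ordinal.{0} := BourgainAux.mRankC f p ε Set.univ + 1 with ha
  have hDa : derivSeq f p ε a = ∅ := by
    have := BourgainAux.mRankC_empty hexf Set.univ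
    rwa [Set.univ_inter] at this
  have haα : a ≤ bAlpha f p ε := by
    by_contra hlt
    push_neg at hlt
    have hmemα : derivSeq f p ε (bAlpha f p ε) = ∅ :=
      csInf_mem (⟨a, hDa⟩ : Set.Nonempty {ν : Ordinal.{0} | derivSeq f p ε ν = ∅})
    have hle : bAlpha f p ε ≤ BourgainAux.mRankC f p ε Set.univ := by
      rw [ha] at hlt
      exact Order.lt_add_one_iff.mp hlt
    have hne := BourgainAux.mRankC_nonempty hexf isClosed_univ Set.univ_nonempty
    rw [Set.univ_inter] at hne
    have := hne.mono (BourgainAux.derivSeq_antitone f p ε _ _ hle)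
    rw [hmemα] at this
    exact this.ne_empty rfl
  have hαrank : bAlpha f p ε ≤ bourgainRank f :=
    le_ciSup (Ordinal.bddAbove_range _) (⟨p, ⟨ε, hε⟩⟩ : ℚ × {ε : ℚ // 0 < ε})
  have haβ : a < bAlpha g q δ := lt_of_le_of_lt (haα.trans hαrank) hqδ
  have hinit : (derivSeq g q δ a).Nonempty := by
    rw [Set.nonempty_iff_ne_empty]
    intro hE
    exact absurd haβ (not_lt.mpr (csInf_le' hE))
  refine ⟨q, δ, hδ, BourgainAux.kFun f g p ε q δ,
    BourgainAux.kFun_continuous f g p ε q δ, ?_⟩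
  intro A b hcorr
  obtain ⟨sd, hgside, hfside⟩ := BourgainAux.kFun_spec hexf hinit A
  cases sd
  · -- high side: g (k A) ≥ q + δ, f A > p - ε
    simp only [BourgainAux.gSide, if_false, Bool.false_eq_true] at hgside
    simp only [if_false, Bool.false_eq_true] at hfside
    rcases hcorr with ⟨rfl, hlt⟩ | ⟨rfl, -⟩
    · exact absurd hlt (not_lt.mpr hgside)
    · exact Or.inr ⟨rfl, hfside⟩
  · -- low side: g (k A) ≤ q - δ, f A < p + ε
    simp only [BourgainAux.gSide, if_true] at hgside
    simp only [if_true] at hfside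
    rcases hcorr with ⟨rfl, -⟩ | ⟨rfl, hgt⟩
    · exact Or.inl ⟨rfl, hfside⟩
    · exact absurd hgt (not_lt.mpr hgside)
end

section
/- Let f, g : 2^ω → ℝ be Baire 1 functions with |f|_α = |g|_α a limit ordinal. Then f ≤_m g (hence the class of Baire 1 functions of Bourgain rank equal to a fixed limit ordinal forms a single ≤_m-equivalence class). -/
section DDW
open Set PiNat

section Aux

variable {f g : Cantor → ℝ} {p ε q δ : ℚ}

/-- The side of `f`-values: `true` means below `p+ε`, `false` means above `p-ε`. -/
def sideF (p ε : ℚ) (s : Bool) (r : ℝ) : Prop :=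
  if s then r < (p : ℝ) + (ε : ℝ) else (p : ℝ) - (ε : ℝ) < r

/-- The strict side of `g`-values. -/
def sideG (q δ : ℚ) (s : Bool) (r : ℝ) : Prop :=
  if s then r ≤ (q : ℝ) - (δ : ℝ) else (q : ℝ) + (δ : ℝ) ≤ r

lemma transfer_of_sides {A z : Cantor} {s : Bool}
    (hfA : sideF p ε s (f A)) (hgz : sideG q δ s (g z)) :
    ∀ b, CorrectAnswer g z q δ b → CorrectAnswer f A p ε b := by
  intro b hb
  cases s with
  | false =>
    rcases hb with ⟨hb, hlt⟩ | ⟨hb, _⟩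
    · simp only [sideG, if_neg Bool.false_ne_true] at hgz
      exact absurd hlt (by simp at hgz ⊢; linarith)
    · exact Or.inr ⟨hb, by simpa [sideF] using hfA⟩
  | true =>
    rcases hb with ⟨hb, _⟩ | ⟨hb, hgt⟩
    · exact Or.inl ⟨hb, by simpa [sideF] using hfA⟩
    · simp only [sideG, if_pos] at hgz
      exact absurd hgt (by simp; linarith)

lemma derivSeq_zero (f : Cantor → ℝ) (p ε : ℚ) : derivSeq f p ε 0 = univ :=
  Ordinal.limitRecOn_zero _ _ _

lemma derivSeq_succ (f : Cantor → ℝ) (p ε : ℚ) (ν : Ordinal.{0}) :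
    derivSeq f p ε (Order.succ ν) =
      derivSeq f p ε ν \ ⋃₀ {U : Set Cantor | IsOpen U ∧
        (f '' (derivSeq f p ε ν ∩ U) ⊆ Set.Iio ((p : ℝ) + (ε : ℝ)) ∨
         f '' (derivSeq f p ε ν ∩ U) ⊆ Set.Ioi ((p : ℝ) - (ε : ℝ)))} :=
  Ordinal.limitRecOn_succ _ _ _ _

lemma derivSeq_limit (f : Cantor → ℝ) (p ε : ℚ) {ν : Ordinal.{0}} (h : Order.IsSuccLimit ν) :
    derivSeq f p ε ν = ⋂ (μ : {μ : Ordinal.{0} // μ < ν}), derivSeq f p ε μ.1 :=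
  Ordinal.limitRecOn_limit _ _ _ _ h

lemma isClosed_derivSeq (f : Cantor → ℝ) (p ε : ℚ) (ν : Ordinal.{0}) :
    IsClosed (derivSeq f p ε ν) := by
  induction ν using Ordinal.induction with
  | h ν IH =>
    rcases Ordinal.zero_or_succ_or_isSuccLimit ν with rfl | ⟨o, rfl⟩ | hlim
    · rw [derivSeq_zero]; exact isClosed_univ
    · rw [← Ordinal.add_one_eq_succ, Ordinal.add_one_eq_succ, derivSeq_succ]
      exact (IH o (Order.lt_succ o)).sdiff (isOpen_sUnion fun U hU => hU.1)
    · rw [derivSeq_limit f p ε hlim]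
      exact isClosed_iInter fun μ => IH μ.1 μ.2

lemma derivSeq_anti (f : Cantor → ℝ) (p ε : ℚ) :
    ∀ ν μ : Ordinal.{0}, μ ≤ ν → derivSeq f p ε ν ⊆ derivSeq f p ε μ := by
  intro ν
  induction ν using Ordinal.induction with
  | h ν IH =>
    intro μ hμ
    rcases eq_or_lt_of_le hμ with rfl | hlt
    · exact subset_rfl
    rcases Ordinal.zero_or_succ_or_isSuccLimit ν with rfl | ⟨o, rfl⟩ | hlim
    · exact absurd hlt (not_lt_of_ge (zero_le (a := μ)))
    · rw [← Ordinal.add_one_eq_succ, Ordinal.add_one_eq_succ] at *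
      rw [derivSeq_succ]
      exact (diff_subset).trans (IH o (Order.lt_succ o) μ (Order.lt_succ_iff.mp hlt))
    · rw [derivSeq_limit f p ε hlim]
      exact iInter_subset (fun μ' : {μ' : Ordinal.{0} // μ' < ν} => derivSeq f p ε μ'.1)
        ⟨μ, hlt⟩

/-- Every point outside `P^ν` has a rank: it is removed at some successor stage `≤ ν`. -/
lemma exists_rank {ν : Ordinal.{0}} {A : Cantor} (hA : A ∉ derivSeq f p ε ν) :
    ∃ r : Ordinal.{0}, Order.succ r ≤ ν ∧ A ∈ derivSeq f p ε r ∧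
      A ∉ derivSeq f p ε (Order.succ r) := by
  have hne : {o : Ordinal.{0} | A ∉ derivSeq f p ε o}.Nonempty := ⟨ν, hA⟩
  have hmem := csInf_mem hne
  set a := sInf {o : Ordinal.{0} | A ∉ derivSeq f p ε o} with ha
  have hle : a ≤ ν := csInf_le' hA
  rcases Ordinal.zero_or_succ_or_isSuccLimit a with h0 | ⟨o, ho⟩ | hlim
  · exfalso
    rw [h0] at hmem
    exact hmem (by rw [derivSeq_zero]; trivial)
  · refine ⟨o, ?_, ?_, ?_⟩
    · rw [ho]; exact hle
    · by_contra hc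
      have h2 : a ≤ o := csInf_le' hc
      rw [← ho] at h2
      exact absurd h2 (not_le.mpr (Order.lt_succ o))
    · rw [ho]; exact hmem
  · exfalso
    apply hmem
    rw [derivSeq_limit f p ε hlim, mem_iInter]
    intro μ
    by_contra hc
    have : a ≤ μ.1 := csInf_le' hc
    exact absurd this (not_le.mpr μ.2)

/-- Extraction of a removal witness at a successor stage. -/
lemma exists_removal {r : Ordinal.{0}} {A : Cantor} (hA : A ∈ derivSeq f p ε r)
    (hA' : A ∉ derivSeq f p ε (Order.succ r)) :
    ∃ U : Set Cantor, IsOpen U ∧ A ∈ U ∧ ∃ s : Bool,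
      ∀ x ∈ derivSeq f p ε r ∩ U, sideF p ε s (f x) := by
  rw [derivSeq_succ, mem_diff, not_and, not_not] at hA'
  obtain ⟨U, ⟨hU, hside⟩, hAU⟩ := hA' hA
  refine ⟨U, hU, hAU, ?_⟩
  rcases hside with h | h
  · exact ⟨true, fun x hx => by
      simpa [sideF] using h (mem_image_of_mem f hx)⟩
  · exact ⟨false, fun x hx => by
      simpa [sideF] using h (mem_image_of_mem f hx)⟩

/-- Key fact about nonempty derived sets (Lemma B): near a point of `Q^{r+1}` one finds
points of `Q^r` with `g`-values strictly on either prescribed side. -/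
lemma exists_point_side {r : Ordinal.{0}} {y : Cantor}
    (hy : y ∈ derivSeq g q δ (Order.succ r)) {V : Set Cantor} (hV : IsOpen V)
    (hyV : y ∈ V) (s : Bool) :
    ∃ z, z ∈ derivSeq g q δ r ∧ z ∈ V ∧ sideG q δ s (g z) := by
  by_contra hcon
  push_neg at hcon
  rw [derivSeq_succ, mem_diff] at hy
  apply hy.2
  refine ⟨V, ⟨hV, ?_⟩, hyV⟩
  cases s with
  | true =>
    right
    rintro v ⟨z, hz, rfl⟩
    have := hcon z hz.1 hz.2
    simp only [sideG, if_pos] at this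
    simpa using lt_of_not_ge this
  | false =>
    left
    rintro v ⟨z, hz, rfl⟩
    have := hcon z hz.1 hz.2
    simp only [sideG, if_neg Bool.false_ne_true] at this
    simpa using lt_of_not_ge this

end Aux

section Cyl

lemma isOpen_cyl (x : Cantor) (n : ℕ) : IsOpen (cylinder x n) :=
  PiNat.isOpen_cylinder (fun _ : ℕ => Bool) x n

lemma isClosed_cyl (x : Cantor) (n : ℕ) : IsClosed (cylinder x n) := by
  rw [PiNat.cylinder_eq_pi]
  exact isClosed_set_pi fun i _ => isClosed_singleton

lemma isClopen_cyl (x : Cantor) (n : ℕ) : IsClopen (cylinder x n) :=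
  ⟨isClosed_cyl x n, isOpen_cyl x n⟩

/-- Cylinders form a neighborhood basis. -/
lemma exists_cyl_subset {V : Set Cantor} (hV : IsOpen V) {A : Cantor} (hA : A ∈ V) :
    ∃ n, cylinder A n ⊆ V := by
  obtain ⟨u, ⟨x, n, rfl⟩, hAu, huV⟩ :=
    (PiNat.isTopologicalBasis_cylinders (fun _ : ℕ => Bool)).exists_subset_of_mem_open hA hV
  exact ⟨n, by rw [PiNat.mem_cylinder_iff_eq.1 hAu]; exact huV⟩

end Cyl

section Glue

variable {f g : Cantor → ℝ} {p ε q δ : ℚ}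

/-- Gluing a finite list of continuous functions on clopen pieces (with default `y`). -/
lemma glue_list (y : Cantor) (L : List (Set Cantor × (Cantor → Cantor)))
    (hL : ∀ pr ∈ L, IsClopen pr.1 ∧ Continuous pr.2) :
    ∃ k : Cantor → Cantor, Continuous k ∧
      (∀ A, (∀ pr ∈ L, A ∉ pr.1) → k A = y) ∧
      (∀ A, ∀ pr ∈ L, A ∈ pr.1 → ∃ pr' ∈ L, A ∈ pr'.1 ∧ k A = pr'.2 A) := by
  classical
  induction L with
  | nil => exact ⟨fun _ => y, continuous_const, fun A _ => rfl, by simp⟩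
  | cons hd tl IH =>
    obtain ⟨k', hk', hout, hin⟩ := IH (fun pr h => hL pr (List.mem_cons_of_mem _ h))
    refine ⟨fun A => if A ∈ hd.1 then hd.2 A else k' A, ?_, ?_, ?_⟩
    · apply Continuous.if ?_ (hL hd (List.mem_cons_self)).2 hk'
      intro a ha
      rw [show {x | x ∈ hd.1} = hd.1 from rfl,
        (hL hd (List.mem_cons_self)).1.frontier_eq] at ha
      exact absurd ha (notMem_empty a)
    · intro A hA
      simp only [if_neg (hA hd (List.mem_cons_self))]
      exact hout A fun pr h => hA pr (List.mem_cons_of_mem _ h)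
    · intro A pr hpr hApr
      by_cases hAhd : A ∈ hd.1
      · exact ⟨hd, List.mem_cons_self, hAhd, by simp only [if_pos hAhd]⟩
      · rcases List.mem_cons.1 hpr with rfl | htl
        · exact absurd hApr hAhd
        · obtain ⟨pr', hpr', hApr', hval⟩ := hin A pr htl hApr
          exact ⟨pr', List.mem_cons_of_mem _ hpr', hApr', by simp only [if_neg hAhd]; exact hval⟩

end Glue

section Main

variable (f g : Cantor → ℝ) (p ε q δ : ℚ)

/-- Answer transfer condition. -/
def Transfer (A z : Cantor) : Prop :=
  ∀ b, CorrectAnswer g z q δ b → CorrectAnswer f A p ε b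

/-- Statement C: reduction on a clopen set `S` avoiding `P^ν`, mapping close to a
point `y ∈ Q^ν`. -/
def StC (ν : Ordinal.{0}) : Prop :=
  ∀ S : Set Cantor, IsClopen S → derivSeq f p ε ν ∩ S = ∅ →
    ∀ y, y ∈ derivSeq g q δ ν → ∀ m : ℕ,
      ∃ k : Cantor → Cantor, Continuous k ∧ (∀ A, k A ∈ cylinder y m) ∧
        ∀ A ∈ S, Transfer f g p ε q δ A (k A)

/-- Statement D: reduction on a clopen `S` on which `f` has rank `≤ ν` with one-sided
top level. -/
def StD (ν : Ordinal.{0}) : Prop :=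
  ∀ S : Set Cantor, IsClopen S → derivSeq f p ε (Order.succ ν) ∩ S = ∅ →
    ∀ s : Bool, (∀ x ∈ derivSeq f p ε ν ∩ S, sideF p ε s (f x)) →
      ∀ y, y ∈ derivSeq g q δ ν → sideG q δ s (g y) → ∀ m : ℕ,
        ∃ k : Cantor → Cantor, Continuous k ∧ (∀ A, k A ∈ cylinder y m) ∧
          ∀ A ∈ S, Transfer f g p ε q δ A (k A)

lemma stage : ∀ ν : Ordinal.{0}, StC f g p ε q δ ν ∧ StD f g p ε q δ ν := by
  intro ν
  induction ν using Ordinal.induction with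
  | h ν IH =>
  classical
  have hC : StC f g p ε q δ ν := by
    intro S hS hPS y hy m
    have hpoint : ∀ a : {x : Cantor // x ∈ S}, ∃ (n : ℕ) (r : Ordinal.{0}) (s : Bool),
        r < ν ∧ derivSeq f p ε (Order.succ r) ∩ cylinder a.1 n = ∅ ∧
        ∀ x ∈ derivSeq f p ε r ∩ cylinder a.1 n, sideF p ε s (f x) := by
      rintro ⟨A, hA⟩
      have hAν : A ∉ derivSeq f p ε ν := fun hc =>
        (eq_empty_iff_forall_notMem.1 hPS A) ⟨hc, hA⟩
      obtain ⟨r, hrν, hAr, hAr'⟩ := exists_rank hAν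
      obtain ⟨U, hU, hAU, s, hside⟩ := exists_removal hAr hAr'
      have hWopen : IsOpen (derivSeq f p ε (Order.succ r))ᶜ :=
        (isClosed_derivSeq f p ε _).isOpen_compl
      obtain ⟨n, hn⟩ := exists_cyl_subset (hU.inter hWopen) ⟨hAU, hAr'⟩
      refine ⟨n, r, s, Order.succ_le_iff.mp hrν, ?_, ?_⟩
      · apply eq_empty_iff_forall_notMem.2
        rintro x ⟨hx1, hx2⟩
        exact (hn hx2).2 hx1
      · intro x hx
        exact hside x ⟨hx.1, (hn hx.2).1⟩
    choose n r s hrlt hempty hside using hpoint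
    have hScomp : IsCompact S := hS.1.isCompact
    have hcover : S ⊆ ⋃ a : {x // x ∈ S}, cylinder a.1 (n a) := fun x hx =>
      mem_iUnion.2 ⟨⟨x, hx⟩, self_mem_cylinder _ _⟩
    obtain ⟨t, ht⟩ := hScomp.elim_finite_subcover
      (fun a : {x // x ∈ S} => cylinder a.1 (n a)) (fun a => isOpen_cyl _ _) hcover
    have hka : ∀ a : {x : Cantor // x ∈ S}, ∃ ka : Cantor → Cantor, Continuous ka ∧
        (∀ A, ka A ∈ cylinder y m) ∧
        ∀ A ∈ cylinder a.1 (n a), Transfer f g p ε q δ A (ka A) := by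
      intro a
      have hy' : y ∈ derivSeq g q δ (Order.succ (r a)) :=
        derivSeq_anti g q δ ν (Order.succ (r a)) (Order.succ_le_of_lt (hrlt a)) hy
      obtain ⟨z, hz1, hz2, hz3⟩ := exists_point_side hy' (isOpen_cyl y m)
        (self_mem_cylinder y m) (s a)
      obtain ⟨ka, hc, hpre, htr⟩ := (IH (r a) (hrlt a)).2 (cylinder a.1 (n a))
        (isClopen_cyl _ _) (hempty a) (s a) (hside a) z hz1 hz3 m
      refine ⟨ka, hc, fun A => ?_, htr⟩
      intro i hi
      exact ((hpre A) i hi).trans (hz2 i hi)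
    choose ka hkc hkpre hktr using hka
    obtain ⟨k, hkcont, hkout, hkin⟩ := glue_list y
      (t.toList.map fun a => (cylinder a.1 (n a), ka a))
      (by rintro pr hpr
          simp only [List.mem_map] at hpr
          obtain ⟨a, _, rfl⟩ := hpr
          exact ⟨isClopen_cyl _ _, hkc a⟩)
    refine ⟨k, hkcont, ?_, ?_⟩
    · intro A
      by_cases hcase : ∀ pr ∈ (t.toList.map fun a => (cylinder a.1 (n a), ka a)), A ∉ pr.1
      · rw [hkout A hcase]; exact self_mem_cylinder _ _
      · push_neg at hcase
        obtain ⟨pr, hpr, hApr⟩ := hcase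
        obtain ⟨pr', hpr', hApr', hval⟩ := hkin A pr hpr hApr
        simp only [List.mem_map] at hpr'
        obtain ⟨a, _, rfl⟩ := hpr'
        rw [hval]; exact hkpre a A
    · intro A hA
      have hmem := ht hA
      simp only [mem_iUnion] at hmem
      obtain ⟨a, hat, hAa⟩ := hmem
      have hpr : (cylinder a.1 (n a), ka a) ∈
          t.toList.map (fun a => (cylinder a.1 (n a), ka a)) :=
        List.mem_map.2 ⟨a, Finset.mem_toList.2 hat, rfl⟩
      obtain ⟨pr', hpr', hApr', hval⟩ := hkin A _ hpr hAa
      simp only [List.mem_map] at hpr'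
      obtain ⟨a', _, rfl⟩ := hpr'
      rw [hval]
      exact hktr a' A hApr'
  refine ⟨hC, ?_⟩
  -- Statement D at level ν, using hC
  intro S hS hPS s hsideS y hy hgy m
  set W : Set Cantor := S ∩ (derivSeq f p ε ν)ᶜ with hWdef
  have hWopen : IsOpen W := hS.2.inter (isClosed_derivSeq f p ε ν).isOpen_compl
  have hWempty : ∀ V : Set Cantor, V ⊆ W → derivSeq f p ε ν ∩ V = ∅ := by
    intro V hV
    apply eq_empty_iff_forall_notMem.2
    rintro x ⟨hx1, hx2⟩
    exact (hV hx2).2 hx1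
  set M : Cantor → Set ℕ := fun A => {j | cylinder A j ⊆ W} with hMdef
  have hpiece : ∀ V : Set Cantor, ∀ j : ℕ, IsClopen V → derivSeq f p ε ν ∩ V = ∅ →
      ∃ k : Cantor → Cantor, Continuous k ∧ (∀ A, k A ∈ cylinder y j) ∧
        ∀ A ∈ V, Transfer f g p ε q δ A (k A) := fun V j h1 h2 => hC V h1 h2 y hy j
  set pieceK : Set Cantor → ℕ → Cantor → Cantor := fun V j =>
    if h : IsClopen V ∧ derivSeq f p ε ν ∩ V = ∅ then (hpiece V j h.1 h.2).choose
    else fun _ => y with hpieceKdef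
  have pieceK_spec : ∀ V j, IsClopen V → derivSeq f p ε ν ∩ V = ∅ →
      Continuous (pieceK V j) ∧ (∀ A, pieceK V j A ∈ cylinder y j) ∧
        ∀ A ∈ V, Transfer f g p ε q δ A (pieceK V j A) := by
    intro V j h1 h2
    rw [hpieceKdef]
    simp only [dif_pos (show IsClopen V ∧ derivSeq f p ε ν ∩ V = ∅ from ⟨h1, h2⟩)]
    exact (hpiece V j h1 h2).choose_spec
  set k : Cantor → Cantor := fun A =>
    if h : (M A).Nonempty then pieceK (cylinder A (sInf (M A))) (max m (sInf (M A))) A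
    else y with hkdef
  have hkpos : ∀ A, (M A).Nonempty →
      k A = pieceK (cylinder A (sInf (M A))) (max m (sInf (M A))) A := by
    intro A h; rw [hkdef]; simp only [dif_pos h]
  have hkneg : ∀ A, ¬(M A).Nonempty → k A = y := by
    intro A h; rw [hkdef]; simp only [dif_neg h]
  have hMne : ∀ A, A ∈ W → (M A).Nonempty := by
    intro A h
    obtain ⟨j, hj⟩ := exists_cyl_subset hWopen h
    exact ⟨j, hj⟩
  have hMcylW : ∀ A, (h : (M A).Nonempty) → cylinder A (sInf (M A)) ⊆ W :=
    fun A h => Nat.sInf_mem h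
  have hstab : ∀ A B, (M A).Nonempty → B ∈ cylinder A (sInf (M A)) →
      (M B).Nonempty ∧ sInf (M B) = sInf (M A) := by
    intro A B hA hB
    have hcyleq : cylinder B (sInf (M A)) = cylinder A (sInf (M A)) :=
      mem_cylinder_iff_eq.1 hB
    have hmem : sInf (M A) ∈ M B := by
      show cylinder B (sInf (M A)) ⊆ W
      rw [hcyleq]; exact hMcylW A hA
    have hne : (M B).Nonempty := ⟨_, hmem⟩
    refine ⟨hne, le_antisymm (Nat.sInf_le hmem) ?_⟩
    by_contra hlt
    push_neg at hlt
    have hBj : B ∈ cylinder A (sInf (M B)) := cylinder_anti A (le_of_lt hlt) hB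
    have : cylinder B (sInf (M B)) = cylinder A (sInf (M B)) := mem_cylinder_iff_eq.1 hBj
    have hmemA : sInf (M B) ∈ M A := by
      show cylinder A (sInf (M B)) ⊆ W
      rw [← this]; exact Nat.sInf_mem hne
    exact absurd (Nat.sInf_le hmemA) (not_le.mpr hlt)
  refine ⟨k, ?_, ?_, ?_⟩
  · -- continuity
    rw [continuous_pi_iff]
    intro j
    rw [continuous_iff_continuousAt]
    intro A
    by_cases h : (M A).Nonempty
    · have h2 : derivSeq f p ε ν ∩ cylinder A (sInf (M A)) = ∅ := hWempty _ (hMcylW A h)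
      have hspec := pieceK_spec (cylinder A (sInf (M A))) (max m (sInf (M A)))
        (isClopen_cyl _ _) h2
      have heq : ∀ B ∈ cylinder A (sInf (M A)),
          k B = pieceK (cylinder A (sInf (M A))) (max m (sInf (M A))) B := by
        intro B hB
        obtain ⟨hBne, hBsInf⟩ := hstab A B h hB
        rw [hkpos B hBne, hBsInf, mem_cylinder_iff_eq.1 hB]
      have hev : (fun B => k B j) =ᶠ[nhds A]
          (fun B => pieceK (cylinder A (sInf (M A))) (max m (sInf (M A))) B j) :=
        Filter.eventuallyEq_of_mem
          ((isOpen_cyl A (sInf (M A))).mem_nhds (self_mem_cylinder A _))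
          (fun B hB => by rw [heq B hB])
      exact (((continuous_apply j).comp hspec.1).continuousAt).congr hev.symm
    · have heq : ∀ B ∈ cylinder A (j + 1), k B j = y j := by
        intro B hB
        by_cases hB' : (M B).Nonempty
        · by_cases hle : sInf (M B) ≤ j
          · exfalso
            apply h
            have hBj : B ∈ cylinder A (sInf (M B)) :=
              cylinder_anti A (by omega) hB
            have hcyleq : cylinder B (sInf (M B)) = cylinder A (sInf (M B)) :=
              mem_cylinder_iff_eq.1 hBj
            refine ⟨sInf (M B), ?_⟩
            show cylinder A (sInf (M B)) ⊆ W
            rw [← hcyleq]; exact Nat.sInf_mem hB'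
          · push_neg at hle
            rw [hkpos B hB']
            have h2 : derivSeq f p ε ν ∩ cylinder B (sInf (M B)) = ∅ :=
              hWempty _ (hMcylW B hB')
            have hspec := pieceK_spec (cylinder B (sInf (M B))) (max m (sInf (M B)))
              (isClopen_cyl _ _) h2
            exact (hspec.2.1 B) j (lt_of_lt_of_le hle (le_max_right m _))
        · rw [hkneg B hB']
      have hev : (fun B => k B j) =ᶠ[nhds A] (fun _ => y j) :=
        Filter.eventuallyEq_of_mem
          ((isOpen_cyl A (j + 1)).mem_nhds (self_mem_cylinder A _))
          (fun B hB => heq B hB)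
      exact (continuousAt_const).congr hev.symm
  · -- prefix
    intro A
    by_cases h : (M A).Nonempty
    · rw [hkpos A h]
      have h2 : derivSeq f p ε ν ∩ cylinder A (sInf (M A)) = ∅ := hWempty _ (hMcylW A h)
      have hspec := pieceK_spec (cylinder A (sInf (M A))) (max m (sInf (M A)))
        (isClopen_cyl _ _) h2
      exact cylinder_anti y (le_max_left _ _) (hspec.2.1 A)
    · rw [hkneg A h]; exact self_mem_cylinder _ _
  · -- transfer
    intro A hA
    by_cases hPν : A ∈ derivSeq f p ε ν
    · have hM0 : ¬(M A).Nonempty := by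
        rintro ⟨j, hj⟩
        exact (hj (self_mem_cylinder A j)).2 hPν
      rw [hkneg A hM0]
      exact transfer_of_sides (hsideS A ⟨hPν, hA⟩) hgy
    · have h : (M A).Nonempty := hMne A ⟨hA, hPν⟩
      rw [hkpos A h]
      have h2 : derivSeq f p ε ν ∩ cylinder A (sInf (M A)) = ∅ := hWempty _ (hMcylW A h)
      have hspec := pieceK_spec (cylinder A (sInf (M A))) (max m (sInf (M A)))
        (isClopen_cyl _ _) h2
      exact hspec.2.2 A (self_mem_cylinder _ _)

end Main

section Baire

variable {f : Cantor → ℝ} {p ε : ℚ}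

/-- For a Baire class 1 function, the derivation sequence reaches `∅`. -/
lemma exists_derivSeq_empty (hf : BaireOne f) (hε : 0 < ε) :
    ∃ ν : Ordinal.{0}, derivSeq f p ε ν = ∅ := by
  by_contra hcon
  push_neg at hcon
  -- the map ν ↦ P^ν is not injective
  have hninj : ¬ Function.Injective (derivSeq f p ε) := by
    intro hinj
    exact not_small_ordinal.{0, 0} (small_of_injective hinj)
  simp only [Function.Injective, not_forall] at hninj
  obtain ⟨ν₁, ν₂, heq, hne⟩ := hninj
  -- get a stabilization point
  have hstab : ∃ ν : Ordinal.{0}, derivSeq f p ε (Order.succ ν) = derivSeq f p ε ν := by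
    rcases lt_or_gt_of_ne hne with hlt | hlt
    · exact ⟨ν₁, subset_antisymm (by rw [derivSeq_succ]; exact diff_subset)
        (by rw [heq]; exact derivSeq_anti f p ε ν₂ _ (Order.succ_le_of_lt hlt))⟩
    · exact ⟨ν₂, subset_antisymm (by rw [derivSeq_succ]; exact diff_subset)
        (by rw [← heq]; exact derivSeq_anti f p ε ν₁ _ (Order.succ_le_of_lt hlt))⟩
  obtain ⟨ν, hν⟩ := hstab
  set R := derivSeq f p ε ν with hRdef
  have hRne : R.Nonempty := hcon ν
  have hRclosed : IsClosed R := isClosed_derivSeq f p ε ν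
  -- no relatively open piece of R is one-sided
  have hnopen : ∀ U : Set Cantor, IsOpen U →
      (f '' (R ∩ U) ⊆ Set.Iio ((p : ℝ) + (ε : ℝ)) ∨
       f '' (R ∩ U) ⊆ Set.Ioi ((p : ℝ) - (ε : ℝ))) → R ∩ U = ∅ := by
    intro U hU hside
    rw [derivSeq_succ, ← hRdef] at hν
    apply eq_empty_iff_forall_notMem.2
    rintro x ⟨hx1, hx2⟩
    have : x ∈ R \ ⋃₀ {U | IsOpen U ∧ _} := hν ▸ hx1
    exact this.2 ⟨U, ⟨hU, hside⟩, hx2⟩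
  -- Baire category on the closed set R
  obtain ⟨F, hFc, hFlim⟩ := hf
  haveI : Nonempty ↥R := hRne.to_subtype
  haveI : CompactSpace ↥R := isCompact_iff_compactSpace.mp hRclosed.isCompact
  haveI : LocallyCompactSpace ↥R := WeaklyLocallyCompactSpace.locallyCompactSpace
  -- the closed pieces
  set C : ℕ × Bool → Set ↥R := fun Nb =>
    {x | ∀ n, Nb.1 ≤ n → if Nb.2 then F n x.1 ≤ (p : ℝ) + (ε : ℝ) / 2
      else (p : ℝ) - (ε : ℝ) / 2 ≤ F n x.1} with hCdef
  have hCclosed : ∀ Nb, IsClosed (C Nb) := by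
    rintro ⟨N, b⟩
    have : C (N, b) = ⋂ n : ℕ, {x : ↥R | N ≤ n →
        if b then F n x.1 ≤ (p : ℝ) + (ε : ℝ) / 2
        else (p : ℝ) - (ε : ℝ) / 2 ≤ F n x.1} := by
      ext x; simp [hCdef, Set.mem_iInter]
    rw [this]
    apply isClosed_iInter
    intro i
    by_cases hN : N ≤ i
    · cases b with
      | true =>
        have : {x : ↥R | N ≤ i → (if true then F i x.1 ≤ (p : ℝ) + (ε : ℝ) / 2
            else (p : ℝ) - (ε : ℝ) / 2 ≤ F i x.1)} =
            {x : ↥R | F i x.1 ≤ (p : ℝ) + (ε : ℝ) / 2} := by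
          ext x; simp [hN]
        rw [this]
        exact isClosed_le ((hFc i).comp continuous_subtype_val) continuous_const
      | false =>
        have : {x : ↥R | N ≤ i → (if false then F i x.1 ≤ (p : ℝ) + (ε : ℝ) / 2
            else (p : ℝ) - (ε : ℝ) / 2 ≤ F i x.1)} =
            {x : ↥R | (p : ℝ) - (ε : ℝ) / 2 ≤ F i x.1} := by
          ext x; simp [hN]
        rw [this]
        exact isClosed_le continuous_const ((hFc i).comp continuous_subtype_val)
    · have : {x : ↥R | N ≤ i → (if b then F i x.1 ≤ (p : ℝ) + (ε : ℝ) / 2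
          else (p : ℝ) - (ε : ℝ) / 2 ≤ F i x.1)} = Set.univ := by
        ext x; simp [hN]
      rw [this]
      exact isClosed_univ
  have hCcover : ⋃ Nb, C Nb = Set.univ := by
    apply eq_univ_iff_forall.2
    intro x
    have hεpos : (0 : ℝ) < (ε : ℝ) := by exact_mod_cast hε
    rcases le_total (f x.1) (p : ℝ) with hle | hle
    · have : ∀ᶠ n in Filter.atTop, F n x.1 < (p : ℝ) + (ε : ℝ) / 2 :=
        (hFlim x.1).eventually_lt_const (by linarith)
      obtain ⟨N, hN⟩ := Filter.eventually_atTop.1 this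
      refine mem_iUnion.2 ⟨(N, true), ?_⟩
      intro n hn
      simp only [if_pos]
      exact le_of_lt (hN n hn)
    · have : ∀ᶠ n in Filter.atTop, (p : ℝ) - (ε : ℝ) / 2 < F n x.1 :=
        (hFlim x.1).eventually_const_lt (by linarith)
      obtain ⟨N, hN⟩ := Filter.eventually_atTop.1 this
      refine mem_iUnion.2 ⟨(N, false), ?_⟩
      intro n hn
      simp only [if_neg Bool.false_ne_true]
      exact le_of_lt (hN n hn)
  obtain ⟨Nb, hNb⟩ := nonempty_interior_of_iUnion_of_closed hCclosed hCcover
  obtain ⟨x, hx⟩ := hNb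
  -- translate the interior into an ambient open set
  have hopen : IsOpen (interior (C Nb)) := isOpen_interior
  rw [isOpen_induced_iff] at hopen
  obtain ⟨U, hU, hUeq⟩ := hopen
  -- f is one-sided on R ∩ U
  have honesided : f '' (R ∩ U) ⊆ Set.Iio ((p : ℝ) + (ε : ℝ)) ∨
      f '' (R ∩ U) ⊆ Set.Ioi ((p : ℝ) - (ε : ℝ)) := by
    have hval : ∀ z (hz : z ∈ R ∩ U), (⟨z, hz.1⟩ : ↥R) ∈ C Nb := by
      intro z hz
      have : (⟨z, hz.1⟩ : ↥R) ∈ interior (C Nb) := by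
        rw [← hUeq]; exact hz.2
      exact interior_subset this
    cases hb : Nb.2 with
    | true =>
      left
      rintro v ⟨z, hz, rfl⟩
      have hzC := hval z hz
      have : f z ≤ (p : ℝ) + (ε : ℝ) / 2 := by
        apply le_of_tendsto (hFlim z)
        rw [Filter.eventually_atTop]
        exact ⟨Nb.1, fun n hn => by have := hzC n hn; rwa [hb, if_pos rfl] at this⟩
      have hεpos : (0 : ℝ) < (ε : ℝ) := by exact_mod_cast hε
      simp only [Set.mem_Iio]; linarith
    | false =>
      right
      rintro v ⟨z, hz, rfl⟩
      have hzC := hval z hz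
      have : (p : ℝ) - (ε : ℝ) / 2 ≤ f z := by
        apply ge_of_tendsto (hFlim z)
        rw [Filter.eventually_atTop]
        exact ⟨Nb.1, fun n hn => by have := hzC n hn; rwa [hb, if_neg Bool.false_ne_true] at this⟩
      have hεpos : (0 : ℝ) < (ε : ℝ) := by exact_mod_cast hε
      simp only [Set.mem_Ioi]; linarith
  have hempty := hnopen U hU honesided
  have hxU : x.1 ∈ U := by
    have : x ∈ Subtype.val ⁻¹' U := by rw [hUeq]; exact hx
    exact this
  exact (eq_empty_iff_forall_notMem.1 hempty x.1) ⟨x.2, hxU⟩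

end Baire

end DDW

/-- If `f, g` are Baire 1 functions whose Bourgain ranks are equal to a common limit
ordinal, then `f ≤_m g`. -/
theorem mReducible_of_bourgainRank_eq_limit (f g : Cantor → ℝ) (hf : BaireOne f)
    (hg : BaireOne g) (h : bourgainRank f = bourgainRank g)
    (hlim : Order.IsSuccLimit (bourgainRank f)) : MReducible f g := by
  intro p ε hε
  classical
  have hne : {ν : Ordinal.{0} | derivSeq f p ε ν = ∅}.Nonempty :=
    exists_derivSeq_empty hf hε
  have hPa : derivSeq f p ε (bAlpha f p ε) = ∅ := csInf_mem hne
  set a := bAlpha f p ε with ha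
  have hnotlim : ¬ Order.IsSuccLimit a := by
    intro hal
    have hnonempty : ∀ μ : Ordinal.{0}, μ < a → (derivSeq f p ε μ).Nonempty := by
      intro μ hμ
      by_contra hc
      rw [Set.not_nonempty_iff_eq_empty] at hc
      exact absurd (csInf_le' (show μ ∈ {ν : Ordinal.{0} | derivSeq f p ε ν = ∅} from hc))
        (not_le.mpr hμ)
    haveI : Nonempty {μ : Ordinal.{0} // μ < a} := ⟨⟨0, hal.pos⟩⟩
    have hdir : Directed (· ⊇ ·)
        (fun μ : {μ : Ordinal.{0} // μ < a} => derivSeq f p ε μ.1) := by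
      intro i j
      rcases le_total i.1 j.1 with hle | hle
      · exact ⟨j, derivSeq_anti f p ε j.1 i.1 hle, subset_rfl⟩
      · exact ⟨i, subset_rfl, derivSeq_anti f p ε i.1 j.1 hle⟩
    have hint := IsCompact.nonempty_iInter_of_directed_nonempty_isCompact_isClosed
      (fun μ : {μ : Ordinal.{0} // μ < a} => derivSeq f p ε μ.1) hdir
      (fun μ => hnonempty μ.1 μ.2)
      (fun μ => (isClosed_derivSeq f p ε μ.1).isCompact)
      (fun μ => isClosed_derivSeq f p ε μ.1)
    rw [← derivSeq_limit f p ε hal, hPa] at hint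
    simpa using hint
  have hale : a ≤ bourgainRank f := by
    rw [ha]
    exact le_ciSup (Ordinal.bddAbove_range _) (⟨p, ⟨ε, hε⟩⟩ : ℚ × {ε' : ℚ // 0 < ε'})
  have halt : a < bourgainRank f := lt_of_le_of_ne hale (fun hEq => hnotlim (hEq ▸ hlim))
  have hex : ∃ x : ℚ × {ε' : ℚ // 0 < ε'}, a < bAlpha g x.1 x.2.1 := by
    by_contra hc
    push_neg at hc
    have hle : bourgainRank g ≤ a := ciSup_le hc
    rw [← h] at hle
    exact absurd halt (not_lt.mpr hle)
  obtain ⟨⟨q, δ, hδ⟩, hqδ⟩ := hex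
  have hQa : (derivSeq g q δ a).Nonempty := by
    by_contra hc
    rw [Set.not_nonempty_iff_eq_empty] at hc
    exact absurd (csInf_le' (show a ∈ {ν : Ordinal.{0} | derivSeq g q δ ν = ∅} from hc))
      (not_le.mpr hqδ)
  obtain ⟨y, hy⟩ := hQa
  obtain ⟨k, hkc, _, htr⟩ := (stage f g p ε q δ a).1 Set.univ isClopen_univ
    (by rw [Set.inter_univ]; exact hPa) y hy 0
  exact ⟨q, δ, hδ, k, hkc, fun A b hb => htr A (Set.mem_univ A) b hb⟩
end

section
/- Let f, g : 2^ω → ℝ be Baire 1 functions with |f|_α = |g|_α = ν + 1 a successor ordinal. Then f ≤_m g if and only if at least one of the following holds: (i) g is two-sided; (ii) f is one-sided and g is neither right-sided nor left-sided; (iii) f and g are both right-sided; (iv) f and g are both left-sided. -/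
/-- `(p,ε)` is a maximal pair for `f` (with `|f|_α = ν + 1`):
`α(f,p,ε) = ν + 1` and `f(P^ν_{f,p,ε}) ⊄ (p-ε, p+ε)`. -/
def IsMaximalPair (f : Cantor → ℝ) (ν : Ordinal) (p ε : ℚ) : Prop :=
  0 < ε ∧ bAlpha f p ε = ν + 1 ∧
    ¬ (f '' derivSeq f p ε ν ⊆ Set.Ioo ((p : ℝ) - (ε : ℝ)) ((p : ℝ) + (ε : ℝ)))

/-- `f` (with `|f|_α = ν + 1`) is two-sided. -/
def TwoSided (f : Cantor → ℝ) (ν : Ordinal) : Prop :=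
  ∃ p ε : ℚ, IsMaximalPair f ν p ε ∧
    ¬ (f '' derivSeq f p ε ν ⊆ Set.Ioi ((p : ℝ) - (ε : ℝ))) ∧
    ¬ (f '' derivSeq f p ε ν ⊆ Set.Iio ((p : ℝ) + (ε : ℝ)))

/-- `f` (with `|f|_α = ν + 1`) is one-sided. -/
def OneSided (f : Cantor → ℝ) (ν : Ordinal) : Prop := ¬ TwoSided f ν

/-- `f` (with `|f|_α = ν + 1`) is left-sided. -/
def LeftSided (f : Cantor → ℝ) (ν : Ordinal) : Prop :=
  ∀ p ε : ℚ, IsMaximalPair f ν p ε → f '' derivSeq f p ε ν ⊆ Set.Iio ((p : ℝ) + (ε : ℝ))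

/-- `f` (with `|f|_α = ν + 1`) is right-sided. -/
def RightSided (f : Cantor → ℝ) (ν : Ordinal) : Prop :=
  ∀ p ε : ℚ, IsMaximalPair f ν p ε → f '' derivSeq f p ε ν ⊆ Set.Ioi ((p : ℝ) - (ε : ℝ))


namespace CantorAux

/-- cylinder of agreement with `A` on coordinates `< n` -/
def cylAt (A : Cantor) (n : ℕ) : Set Cantor := {B | ∀ i, i < n → B i = A i}

lemma self_mem_cylAt (A : Cantor) (n : ℕ) : A ∈ cylAt A n := fun _ _ => rfl

lemma cylAt_zero (A : Cantor) : cylAt A 0 = Set.univ := by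
  ext B; simp [cylAt]

lemma cylAt_eq_of_mem {A B : Cantor} {n : ℕ} (h : B ∈ cylAt A n) : cylAt B n = cylAt A n := by
  ext C; constructor <;> intro hC i hi
  · rw [hC i hi, h i hi]
  · rw [hC i hi, ← h i hi]

lemma cylAt_anti {A : Cantor} {m n : ℕ} (h : m ≤ n) : cylAt A n ⊆ cylAt A m :=
  fun _ hB i hi => hB i (lt_of_lt_of_le hi h)

lemma cylAt_eq_preimage (A : Cantor) (n : ℕ) :
    cylAt A n = (fun B : Cantor => fun i : Fin n => B i.1) ⁻¹' {fun i : Fin n => A i.1} := by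
  ext B
  simp only [cylAt, Set.mem_setOf_eq, Set.mem_preimage, Set.mem_singleton_iff, funext_iff]
  constructor
  · intro h i; exact h i.1 i.2
  · intro h i hi; exact h ⟨i, hi⟩

lemma continuous_restrict (n : ℕ) : Continuous (fun B : Cantor => fun i : Fin n => B i.1) :=
  continuous_pi fun i => continuous_apply i.1

lemma isOpen_cylAt (A : Cantor) (n : ℕ) : IsOpen (cylAt A n) := by
  rw [cylAt_eq_preimage]
  exact (isOpen_discrete _).preimage (continuous_restrict n)

lemma isClosed_cylAt (A : Cantor) (n : ℕ) : IsClosed (cylAt A n) := by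
  rw [cylAt_eq_preimage]
  exact (isClosed_discrete _).preimage (continuous_restrict n)

lemma cylAt_mem_nhds (A : Cantor) (n : ℕ) : cylAt A n ∈ nhds A :=
  (isOpen_cylAt A n).mem_nhds (self_mem_cylAt A n)

lemma exists_cylAt_subset {S : Set Cantor} (hS : IsOpen S) {A : Cantor} (hA : A ∈ S) :
    ∃ n, cylAt A n ⊆ S := by
  obtain ⟨I, u, hu, hsub⟩ := isOpen_pi_iff.1 hS A hA
  refine ⟨(I.sup id) + 1, fun B hB => hsub ?_⟩
  intro i hi
  have : B i = A i := hB i (Nat.lt_succ_of_le (Finset.le_sup (f := id) hi))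
  rw [this]; exact (hu i hi).2

/-- canonical representative of a cylinder -/
def trunc (A : Cantor) (n : ℕ) : Cantor := fun i => if i < n then A i else false

lemma trunc_mem_cylAt (A : Cantor) (n : ℕ) : trunc A n ∈ cylAt A n :=
  fun i hi => if_pos hi

lemma cylAt_trunc (A : Cantor) (n : ℕ) : cylAt (trunc A n) n = cylAt A n :=
  cylAt_eq_of_mem (trunc_mem_cylAt A n)

lemma trunc_eq_of_mem {A B : Cantor} {n : ℕ} (h : B ∈ cylAt A n) : trunc B n = trunc A n := by
  funext i
  by_cases hi : i < n
  · simp [trunc, hi, h i hi]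
  · simp [trunc, hi]

lemma mem_cylAt_symm {A B : Cantor} {n : ℕ} (h : B ∈ cylAt A n) : A ∈ cylAt B n :=
  fun i hi => (h i hi).symm

end CantorAux

namespace DerivAux

open Set

variable {f : Cantor → ℝ} {p ε : ℚ}

lemma derivSeq_zero (f : Cantor → ℝ) (p ε : ℚ) : derivSeq f p ε 0 = Set.univ := by
  simp [derivSeq]

lemma derivSeq_succ (f : Cantor → ℝ) (p ε : ℚ) (μ : Ordinal) :
    derivSeq f p ε (μ + 1) = derivSeq f p ε μ \ ⋃₀ {U : Set Cantor | IsOpen U ∧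
        (f '' (derivSeq f p ε μ ∩ U) ⊆ Set.Iio ((p : ℝ) + (ε : ℝ)) ∨
         f '' (derivSeq f p ε μ ∩ U) ⊆ Set.Ioi ((p : ℝ) - (ε : ℝ)))} := by
  rw [show (μ + 1 : Ordinal) = Order.succ μ from (Ordinal.add_one_eq_succ μ)]
  simp only [derivSeq, Ordinal.limitRecOn_succ]

lemma derivSeq_limit (f : Cantor → ℝ) (p ε : ℚ) {lo : Ordinal} (h : Order.IsSuccLimit lo) :
    derivSeq f p ε lo = ⋂ (μ : {μ : Ordinal // μ < lo}), derivSeq f p ε μ.1 := by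
  simp only [derivSeq]
  rw [Ordinal.limitRecOn_limit _ _ _ _ h]

lemma derivSeq_succ_subset (f : Cantor → ℝ) (p ε : ℚ) (μ : Ordinal) :
    derivSeq f p ε (μ + 1) ⊆ derivSeq f p ε μ := by
  rw [derivSeq_succ]; exact diff_subset

lemma derivSeq_anti (f : Cantor → ℝ) (p ε : ℚ) :
    ∀ {μ κ : Ordinal}, μ ≤ κ → derivSeq f p ε κ ⊆ derivSeq f p ε μ := by
  intro μ κ
  induction κ using Ordinal.induction with
  | h κ ih =>
    intro hμκ
    rcases Ordinal.zero_or_succ_or_isSuccLimit κ with h0 | ⟨κ', rfl⟩ | hlim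
    · subst h0
      have : μ = 0 := le_antisymm (by simpa using hμκ) (zero_le (a := μ))
      subst this; exact subset_rfl
    · rw [← Ordinal.add_one_eq_succ] at *
      rcases eq_or_lt_of_le hμκ with rfl | hlt
      · exact subset_rfl
      · have hμκ' : μ ≤ κ' := Order.lt_succ_iff.mp (by rwa [Ordinal.add_one_eq_succ] at hlt)
        exact (derivSeq_succ_subset f p ε κ').trans
          (ih κ' (by rw [Ordinal.add_one_eq_succ]; exact Order.lt_succ κ') hμκ')
    · rcases eq_or_lt_of_le hμκ with rfl | hlt
      · exact subset_rfl
      · rw [derivSeq_limit f p ε hlim]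
        exact iInter_subset (fun (x : {x : Ordinal // x < κ}) => derivSeq f p ε x.1) ⟨μ, hlt⟩

lemma isClosed_derivSeq (f : Cantor → ℝ) (p ε : ℚ) (μ : Ordinal) :
    IsClosed (derivSeq f p ε μ) := by
  induction μ using Ordinal.induction with
  | h μ ih =>
    rcases Ordinal.zero_or_succ_or_isSuccLimit μ with h0 | ⟨μ', rfl⟩ | hlim
    · subst h0; rw [derivSeq_zero]; exact isClosed_univ
    · rw [← Ordinal.add_one_eq_succ, derivSeq_succ]
      refine (ih μ' (Order.lt_succ μ')).sdiff ?_
      exact isOpen_sUnion (fun U hU => hU.1)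
    · rw [derivSeq_limit f p ε hlim]
      exact isClosed_iInter (fun μ' => ih μ'.1 μ'.2)

lemma mem_derivSeq_succ_iff {A : Cantor} {μ : Ordinal} :
    A ∈ derivSeq f p ε (μ + 1) ↔ A ∈ derivSeq f p ε μ ∧
      ¬ ∃ U : Set Cantor, IsOpen U ∧ A ∈ U ∧
        (f '' (derivSeq f p ε μ ∩ U) ⊆ Set.Iio ((p : ℝ) + (ε : ℝ)) ∨
         f '' (derivSeq f p ε μ ∩ U) ⊆ Set.Ioi ((p : ℝ) - (ε : ℝ))) := by
  rw [derivSeq_succ, Set.mem_diff, Set.mem_sUnion]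
  constructor
  · rintro ⟨h1, h2⟩
    exact ⟨h1, fun ⟨U, hU, hAU, hside⟩ => h2 ⟨U, ⟨hU, hside⟩, hAU⟩⟩
  · rintro ⟨h1, h2⟩
    exact ⟨h1, fun ⟨U, ⟨hU, hside⟩, hAU⟩ => h2 ⟨U, hU, hAU, hside⟩⟩

/-- Richness: a point surviving to stage `μ+1` has both high and low points of
level `μ` in every neighborhood. -/
lemma richness {B : Cantor} {μ : Ordinal} (hB : B ∈ derivSeq f p ε (μ + 1))
    {W : Set Cantor} (hW : IsOpen W) (hBW : B ∈ W) :
    (∃ C ∈ derivSeq f p ε μ ∩ W, (p : ℝ) + (ε : ℝ) ≤ f C) ∧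
    (∃ C ∈ derivSeq f p ε μ ∩ W, f C ≤ (p : ℝ) - (ε : ℝ)) := by
  rw [mem_derivSeq_succ_iff] at hB
  obtain ⟨_, h2⟩ := hB
  push_neg at h2
  obtain ⟨hhi, hlo⟩ := h2 W hW hBW
  constructor
  · obtain ⟨y, ⟨C, hC, rfl⟩, hy⟩ := Set.not_subset.1 hhi
    exact ⟨C, hC, not_lt.1 hy⟩
  · obtain ⟨y, ⟨C, hC, rfl⟩, hy⟩ := Set.not_subset.1 hlo
    exact ⟨C, hC, not_lt.1 hy⟩

/-- Monotonicity in the interval: a subinterval has larger derivation sets. -/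
lemma derivSeq_mono_interval {p' ε' : ℚ}
    (h1 : (p : ℝ) - (ε : ℝ) ≤ (p' : ℝ) - (ε' : ℝ)) (h2 : (p' : ℝ) + (ε' : ℝ) ≤ (p : ℝ) + (ε : ℝ)) :
    ∀ μ : Ordinal, derivSeq f p ε μ ⊆ derivSeq f p' ε' μ := by
  intro μ
  induction μ using Ordinal.induction with
  | h μ ih =>
    rcases Ordinal.zero_or_succ_or_isSuccLimit μ with h0 | ⟨μ', rfl⟩ | hlim
    · subst h0; rw [derivSeq_zero, derivSeq_zero]
    · rw [← Ordinal.add_one_eq_succ]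
      have hμ' : μ' < μ' + 1 := by
        rw [Ordinal.add_one_eq_succ]; exact Order.lt_succ μ'
      intro A hA
      rw [mem_derivSeq_succ_iff] at hA ⊢
      obtain ⟨hA1, hA2⟩ := hA
      refine ⟨ih μ' hμ' hA1, fun ⟨U, hU, hAU, hside⟩ => hA2 ?_⟩
      refine ⟨U, hU, hAU, ?_⟩
      have hsub : derivSeq f p ε μ' ∩ U ⊆ derivSeq f p' ε' μ' ∩ U :=
        Set.inter_subset_inter_left U (ih μ' hμ')
      rcases hside with hs | hs
      · exact Or.inl (fun y hy => lt_of_lt_of_le (hs ((Set.image_mono hsub) hy)) h2)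
      · exact Or.inr (fun y hy => lt_of_le_of_lt h1 (hs ((Set.image_mono hsub) hy)))
    · rw [derivSeq_limit f p ε hlim, derivSeq_limit f p' ε' hlim]
      exact Set.iInter_mono (fun μ' => ih μ'.1 μ'.2)

end DerivAux

namespace DerivAux

lemma derivSeq_empty_mono {f : Cantor → ℝ} {p ε : ℚ} {μ κ : Ordinal} (h : μ ≤ κ)
    (he : derivSeq f p ε μ = ∅) : derivSeq f p ε κ = ∅ :=
  Set.subset_empty_iff.1 (he ▸ derivSeq_anti f p ε h)

/-- The key Baire category step: on any nonempty closed set, a Baire-1 function has a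
relatively open nonempty one-sided piece. -/
lemma exists_onesided_open {f : Cantor → ℝ} (hf : BaireOne f) {p ε : ℚ} (hε : 0 < ε)
    {P : Set Cantor} (hP : IsClosed P) (hne : P.Nonempty) :
    ∃ V : Set Cantor, IsOpen V ∧ (P ∩ V).Nonempty ∧
      (f '' (P ∩ V) ⊆ Set.Iio ((p : ℝ) + (ε : ℝ)) ∨
       f '' (P ∩ V) ⊆ Set.Ioi ((p : ℝ) - (ε : ℝ))) := by
  obtain ⟨F, hFc, hFlim⟩ := hf
  have hεR : (0 : ℝ) < (ε : ℚ) := by exact_mod_cast hε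
  set e : ℝ := (ε : ℝ) / 4 with he_def
  have he : 0 < e := by positivity
  haveI : Nonempty Cantor := ⟨fun _ => false⟩
  haveI hPc : CompactSpace ↥P := isCompact_iff_compactSpace.mp (hP.isCompact)
  haveI : Nonempty ↥P := hne.to_subtype
  -- the closed pieces
  set E : ℕ → Set ↥P := fun N => {x | ∀ j, N ≤ j → ∀ l, N ≤ l → |F j x.1 - F l x.1| ≤ e} with hE_def
  have hEclosed : ∀ N, IsClosed (E N) := by
    intro N
    have : E N = ⋂ (j : ℕ), ⋂ (l : ℕ), {x : ↥P | N ≤ j → N ≤ l → |F j x.1 - F l x.1| ≤ e} := by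
      ext x; simp only [hE_def, Set.mem_setOf_eq, Set.mem_iInter]; tauto
    rw [this]
    refine isClosed_iInter fun j => isClosed_iInter fun l => ?_
    by_cases hj : N ≤ j
    · by_cases hl : N ≤ l
      · have : {x : ↥P | N ≤ j → N ≤ l → |F j x.1 - F l x.1| ≤ e} =
            {x : ↥P | |F j x.1 - F l x.1| ≤ e} := by
          ext x; simp [hj, hl]
        rw [this]
        exact isClosed_le (by continuity) continuous_const
      · have : {x : ↥P | N ≤ j → N ≤ l → |F j x.1 - F l x.1| ≤ e} = Set.univ := by
          ext x; simp [hl]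
        rw [this]; exact isClosed_univ
    · have : {x : ↥P | N ≤ j → N ≤ l → |F j x.1 - F l x.1| ≤ e} = Set.univ := by
        ext x; simp [hj]
      rw [this]; exact isClosed_univ
  have hEcover : (⋃ N, E N) = Set.univ := by
    ext x
    simp only [Set.mem_iUnion, Set.mem_univ, iff_true]
    have hc : CauchySeq (fun n => F n x.1) := (hFlim x.1).cauchySeq
    obtain ⟨N, hN⟩ := Metric.cauchySeq_iff.1 hc e he
    exact ⟨N, fun j hj l hl => le_of_lt (by simpa [Real.dist_eq] using hN j hj l hl)⟩
  haveI : LocallyCompactSpace ↥P := inferInstance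
  haveI : BaireSpace ↥P := inferInstance
  obtain ⟨N, x₀, hx₀⟩ := nonempty_interior_of_iUnion_of_closed hEclosed hEcover
  -- refine by continuity of F N
  have hcont : Continuous fun x : ↥P => F N x.1 := (hFc N).comp continuous_subtype_val
  set O : Set ↥P := interior (E N) ∩ (fun x : ↥P => F N x.1) ⁻¹' Metric.ball (F N x₀.1) e with hO_def
  have hOopen : IsOpen O := isOpen_interior.inter (Metric.isOpen_ball.preimage hcont)
  have hx₀O : x₀ ∈ O := ⟨hx₀, by simp [Metric.mem_ball, he]⟩
  obtain ⟨V, hVopen, hVeq⟩ := isOpen_induced_iff.1 hOopen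
  -- key estimate
  have hclose : ∀ x : ↥P, x ∈ O → |f x.1 - f x₀.1| < 3 * e := by
    intro x hx
    have hxE : x ∈ E N := interior_subset hx.1
    have hx₀E : x₀ ∈ E N := interior_subset hx₀
    have h1 : |f x.1 - F N x.1| ≤ e := by
      have : Filter.Tendsto (fun j => |F j x.1 - F N x.1|) Filter.atTop
          (nhds (|f x.1 - F N x.1|)) := by
        exact ((hFlim x.1).sub tendsto_const_nhds).abs
      refine le_of_tendsto this ?_
      filter_upwards [Filter.eventually_ge_atTop N] with j hj
      exact hxE j hj N le_rfl
    have h2 : |F N x.1 - F N x₀.1| < e := by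
      have := hx.2
      simpa [Real.dist_eq] using this
    have h3 : |F N x₀.1 - f x₀.1| ≤ e := by
      have : Filter.Tendsto (fun j => |F N x₀.1 - F j x₀.1|) Filter.atTop
          (nhds (|F N x₀.1 - f x₀.1|)) := by
        exact (tendsto_const_nhds.sub (hFlim x₀.1)).abs
      refine le_of_tendsto this ?_
      filter_upwards [Filter.eventually_ge_atTop N] with j hj
      exact hx₀E N le_rfl j hj
    have t1 := abs_add_le (f x.1 - F N x.1) (F N x.1 - F N x₀.1)
    have t2 := abs_add_le (f x.1 - F N x₀.1) (F N x₀.1 - f x₀.1)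
    rw [sub_add_sub_cancel] at t1
    rw [sub_add_sub_cancel] at t2
    linarith
  refine ⟨V, hVopen, ⟨x₀.1, x₀.2, by rw [← Set.mem_preimage, hVeq]; exact hx₀O⟩, ?_⟩
  rcases le_or_gt (f x₀.1) (p : ℝ) with hside | hside
  · left
    rintro y ⟨x, ⟨hxP, hxV⟩, rfl⟩
    have hxO : (⟨x, hxP⟩ : ↥P) ∈ O := by rw [← hVeq]; exact hxV
    have := hclose ⟨x, hxP⟩ hxO
    have habs := abs_lt.1 this
    simp only [Set.mem_Iio]
    have : 3 * e < (ε : ℝ) := by rw [he_def]; linarith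
    linarith [habs.2]
  · right
    rintro y ⟨x, ⟨hxP, hxV⟩, rfl⟩
    have hxO : (⟨x, hxP⟩ : ↥P) ∈ O := by rw [← hVeq]; exact hxV
    have := hclose ⟨x, hxP⟩ hxO
    have habs := abs_lt.1 this
    simp only [Set.mem_Ioi]
    have : 3 * e < (ε : ℝ) := by rw [he_def]; linarith
    linarith [habs.1]

end DerivAux

namespace DerivAux

/-- Termination: for a Baire-1 function the derivation reaches `∅`. -/
lemma termination {f : Cantor → ℝ} (hf : BaireOne f) {p ε : ℚ} (hε : 0 < ε) :
    {ν : Ordinal.{0} | derivSeq f p ε ν = ∅}.Nonempty := by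
  by_contra hcon
  rw [Set.not_nonempty_iff_eq_empty] at hcon
  have hne : ∀ ν : Ordinal.{0}, (derivSeq f p ε ν).Nonempty := by
    intro ν
    rw [Set.nonempty_iff_ne_empty]
    intro he
    exact absurd hcon (by rw [Set.eq_empty_iff_forall_notMem]; push_neg; exact ⟨ν, he⟩)
  -- choose a removed point at each level
  have hx : ∀ ν : Ordinal.{0}, ∃ x, x ∈ derivSeq f p ε ν ∧ x ∉ derivSeq f p ε (ν + 1) := by
    intro ν
    obtain ⟨V, hVopen, ⟨x, hxP, hxV⟩, hside⟩ :=
      exists_onesided_open hf hε (isClosed_derivSeq f p ε ν) (hne ν)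
    refine ⟨x, hxP, ?_⟩
    rw [mem_derivSeq_succ_iff]
    rintro ⟨-, h2⟩
    exact h2 ⟨V, hVopen, hxV, hside⟩
  choose x hx1 hx2 using hx
  have hinj : Function.Injective x := by
    intro a b hab
    by_contra hne'
    wlog hlt : a < b generalizing a b
    · exact this hab.symm (Ne.symm hne') ((Ne.lt_or_gt hne').resolve_left hlt)
    have hs : a + 1 ≤ b := by
      rw [Ordinal.add_one_eq_succ]; exact Order.succ_le_of_lt hlt
    have : x b ∈ derivSeq f p ε (a + 1) := derivSeq_anti f p ε hs (hx1 b)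
    rw [← hab] at this
    exact hx2 a this
  -- Burali-Forti style contradiction
  have hinj2 : Function.Injective (fun ν : Ordinal.{0} => (⟨x ν⟩ : ULift.{1} Cantor)) := by
    intro a b hab
    exact hinj (congrArg ULift.down hab)
  have hle : (Cardinal.mk Ordinal.{0}) ≤ Cardinal.mk (ULift.{1} Cantor) :=
    Cardinal.mk_le_of_injective hinj2
  rw [Cardinal.mk_uLift] at hle
  have hlt : Cardinal.lift.{1} (Cardinal.mk Cantor) < Cardinal.univ.{0, 1} :=
    Cardinal.lift_lt_univ _
  rw [Cardinal.univ_id] at hlt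
  exact absurd hle (not_le.2 hlt)

lemma derivSeq_bAlpha_empty {f : Cantor → ℝ} (hf : BaireOne f) {p ε : ℚ} (hε : 0 < ε) :
    derivSeq f p ε (bAlpha f p ε) = ∅ :=
  csInf_mem (termination hf hε)

lemma derivSeq_nonempty_of_lt_bAlpha {f : Cantor → ℝ} {p ε : ℚ} {μ : Ordinal}
    (h : μ < bAlpha f p ε) : (derivSeq f p ε μ).Nonempty := by
  rw [Set.nonempty_iff_ne_empty]
  intro he
  exact absurd (csInf_le' (s := {ν | derivSeq f p ε ν = ∅}) he) (not_le.2 h)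

lemma bAlpha_le_bourgainRank (f : Cantor → ℝ) {p ε : ℚ} (hε : 0 < ε) :
    bAlpha f p ε ≤ bourgainRank f := by
  have := Ordinal.le_iSup (fun x : ℚ × {ε : ℚ // 0 < ε} => bAlpha f x.1 x.2.1) (p, ⟨ε, hε⟩)
  exact this

lemma bAlpha_eq_of_nonempty {g : Cantor → ℝ} (hg : BaireOne g) {q δ : ℚ} (hδ : 0 < δ)
    {ν : Ordinal} (hgr : bourgainRank g = ν + 1)
    (hne : (derivSeq g q δ ν).Nonempty) : bAlpha g q δ = ν + 1 := by
  refine le_antisymm (hgr ▸ bAlpha_le_bourgainRank g hδ) ?_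
  rw [Ordinal.add_one_eq_succ, Order.succ_le_iff]
  by_contra hle
  push_neg at hle
  have := derivSeq_empty_mono hle (derivSeq_bAlpha_empty hg hδ (p := q) (ε := δ))
  rw [this] at hne
  exact Set.not_nonempty_empty hne

lemma rank_attained {g : Cantor → ℝ} {ν : Ordinal} (hgr : bourgainRank g = ν + 1) :
    ∃ q δ : ℚ, 0 < δ ∧ bAlpha g q δ = ν + 1 := by
  by_contra hcon
  push_neg at hcon
  have hub : ∀ x : ℚ × {ε : ℚ // 0 < ε}, bAlpha g x.1 x.2.1 ≤ ν := by
    rintro ⟨q, δ, hδ⟩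
    have h1 : bAlpha g q δ ≤ ν + 1 := hgr ▸ bAlpha_le_bourgainRank g hδ
    have h2 := hcon q δ hδ
    show bAlpha g q δ ≤ ν
    rw [Ordinal.add_one_eq_succ] at h1 h2
    exact Order.le_of_lt_succ (lt_of_le_of_ne h1 h2)
  have : bourgainRank g ≤ ν := Ordinal.iSup_le hub
  rw [hgr] at this
  have : (ν + 1 : Ordinal) ≤ ν := this
  rw [Ordinal.add_one_eq_succ] at this
  exact absurd this (not_le.2 (Order.lt_succ ν))

lemma exists_maximal_pair {g : Cantor → ℝ} (hg : BaireOne g) {ν : Ordinal}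
    (hgr : bourgainRank g = ν + 1) : ∃ q δ : ℚ, IsMaximalPair g ν q δ := by
  obtain ⟨q, δ, hδ, heq⟩ := rank_attained hgr
  by_cases himg : g '' derivSeq g q δ ν ⊆ Set.Ioo ((q : ℝ) - (δ : ℝ)) ((q : ℝ) + (δ : ℝ))
  · -- pass to subintervals
    have hδ4 : 0 < δ / 4 := by positivity
    have hδR : (0:ℝ) < ((δ:ℚ) : ℝ) := by exact_mod_cast hδ
    have hν : (derivSeq g q δ ν).Nonempty :=
      derivSeq_nonempty_of_lt_bAlpha (by rw [heq, Ordinal.add_one_eq_succ]; exact Order.lt_succ ν)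
    have hsub1 : derivSeq g q δ ν ⊆ derivSeq g (q - δ/2) (δ/4) ν :=
      derivSeq_mono_interval (by push_cast; linarith) (by push_cast; linarith) ν
    have hsub2 : derivSeq g q δ ν ⊆ derivSeq g (q + δ/2) (δ/4) ν :=
      derivSeq_mono_interval (by push_cast; linarith) (by push_cast; linarith) ν
    have hb1 : bAlpha g (q - δ/2) (δ/4) = ν + 1 :=
      bAlpha_eq_of_nonempty hg hδ4 hgr (hν.mono hsub1)
    have hb2 : bAlpha g (q + δ/2) (δ/4) = ν + 1 :=
      bAlpha_eq_of_nonempty hg hδ4 hgr (hν.mono hsub2)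
    by_cases h1 : g '' derivSeq g (q - δ/2) (δ/4) ν ⊆
        Set.Ioo (((q - δ/2 : ℚ) : ℝ) - ((δ/4 : ℚ) : ℝ)) (((q - δ/2 : ℚ) : ℝ) + ((δ/4 : ℚ) : ℝ))
    · by_cases h2 : g '' derivSeq g (q + δ/2) (δ/4) ν ⊆
          Set.Ioo (((q + δ/2 : ℚ) : ℝ) - ((δ/4 : ℚ) : ℝ)) (((q + δ/2 : ℚ) : ℝ) + ((δ/4 : ℚ) : ℝ))
      · exfalso
        obtain ⟨x, hx⟩ := hν
        have hx1 := h1 ⟨x, hsub1 hx, rfl⟩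
        have hx2 := h2 ⟨x, hsub2 hx, rfl⟩
        rw [Set.mem_Ioo] at hx1 hx2
        push_cast at hx1 hx2
        linarith [hx1.2, hx2.1]
      · exact ⟨q + δ/2, δ/4, hδ4, hb2, h2⟩
    · exact ⟨q - δ/2, δ/4, hδ4, hb1, h1⟩
  · exact ⟨q, δ, hδ, heq, himg⟩

end DerivAux

namespace DerivAux

lemma correct_imp_hi {f g : Cantor → ℝ} {p ε q δ : ℚ} {k : Cantor → Cantor}
    (hk : ∀ A b, CorrectAnswer g (k A) q δ b → CorrectAnswer f A p ε b)
    (A : Cantor) (h : (p:ℝ) + (ε:ℝ) ≤ f A) : (q:ℝ) + (δ:ℝ) ≤ g (k A) := by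
  by_contra hlt
  push_neg at hlt
  rcases hk A true (Or.inl ⟨rfl, hlt⟩) with ⟨-, h2⟩ | ⟨habs, -⟩
  · exact absurd h (not_le.2 h2)
  · exact absurd habs (by simp)

lemma correct_imp_lo {f g : Cantor → ℝ} {p ε q δ : ℚ} {k : Cantor → Cantor}
    (hk : ∀ A b, CorrectAnswer g (k A) q δ b → CorrectAnswer f A p ε b)
    (A : Cantor) (h : f A ≤ (p:ℝ) - (ε:ℝ)) : g (k A) ≤ (q:ℝ) - (δ:ℝ) := by
  by_contra hlt
  push_neg at hlt
  rcases hk A false (Or.inr ⟨rfl, hlt⟩) with ⟨habs, -⟩ | ⟨-, h2⟩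
  · exact absurd habs (by simp)
  · exact absurd h (not_le.2 h2)

/-- Transfer: a continuous correct-answer reduction maps derivation levels to
derivation levels. -/
lemma transfer {f g : Cantor → ℝ} {p ε q δ : ℚ} {k : Cantor → Cantor} (hkc : Continuous k)
    (hk : ∀ A b, CorrectAnswer g (k A) q δ b → CorrectAnswer f A p ε b) :
    ∀ μ : Ordinal, ∀ A ∈ derivSeq f p ε μ, k A ∈ derivSeq g q δ μ := by
  intro μ
  induction μ using Ordinal.induction with
  | h μ ih =>
    rcases Ordinal.zero_or_succ_or_isSuccLimit μ with h0 | ⟨μ', rfl⟩ | hlim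
    · subst h0; intro A _; rw [derivSeq_zero]; trivial
    · rw [← Ordinal.add_one_eq_succ]
      have hμ' : μ' < μ' + 1 := by rw [Ordinal.add_one_eq_succ]; exact Order.lt_succ μ'
      intro A hA
      rw [mem_derivSeq_succ_iff] at hA ⊢
      obtain ⟨hA1, hA2⟩ := hA
      refine ⟨ih μ' hμ' A hA1, ?_⟩
      rintro ⟨U, hUopen, hkAU, hside⟩
      refine hA2 ⟨k ⁻¹' U, hUopen.preimage hkc, hkAU, ?_⟩
      rcases hside with hs | hs
      · left
        rintro y ⟨B, ⟨hB1, hB2⟩, rfl⟩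
        by_contra hge
        have hge' : (p:ℝ) + (ε:ℝ) ≤ f B := not_lt.1 (by simpa using hge)
        have : (q:ℝ) + (δ:ℝ) ≤ g (k B) := correct_imp_hi hk B hge'
        have hmem : g (k B) ∈ Set.Iio ((q:ℝ) + (δ:ℝ)) :=
          hs ⟨k B, ⟨ih μ' hμ' B hB1, hB2⟩, rfl⟩
        exact absurd hmem (not_lt.2 this)
      · right
        rintro y ⟨B, ⟨hB1, hB2⟩, rfl⟩
        by_contra hge
        have hge' : f B ≤ (p:ℝ) - (ε:ℝ) := not_lt.1 (by simpa using hge)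
        have : g (k B) ≤ (q:ℝ) - (δ:ℝ) := correct_imp_lo hk B hge'
        have hmem : g (k B) ∈ Set.Ioi ((q:ℝ) - (δ:ℝ)) :=
          hs ⟨k B, ⟨ih μ' hμ' B hB1, hB2⟩, rfl⟩
        exact absurd hmem (not_lt.2 this)
    · intro A hA
      rw [derivSeq_limit g q δ hlim]
      rw [derivSeq_limit f p ε hlim] at hA
      simp only [Set.mem_iInter] at hA ⊢
      exact fun μ' => ih μ'.1 μ'.2 A (hA μ')

/-- From a reduction and an `f`-pair of maximal rank, produce a matching `g`-pair. -/
lemma forward_pair {f g : Cantor → ℝ} (hg : BaireOne g) {ν : Ordinal}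
    (hgr : bourgainRank g = ν + 1) (hm : MReducible f g)
    {p ε : ℚ} (hε : 0 < ε) (hb : bAlpha f p ε = ν + 1) :
    ∃ q δ : ℚ, 0 < δ ∧ bAlpha g q δ = ν + 1 ∧
      ∃ k : Cantor → Cantor,
        (∀ A ∈ derivSeq f p ε ν, k A ∈ derivSeq g q δ ν) ∧
        (∀ A, (p:ℝ)+(ε:ℝ) ≤ f A → (q:ℝ)+(δ:ℝ) ≤ g (k A)) ∧
        (∀ A, f A ≤ (p:ℝ)-(ε:ℝ) → g (k A) ≤ (q:ℝ)-(δ:ℝ)) := by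
  obtain ⟨q, δ, hδ, k, hkc, hk⟩ := hm p ε hε
  have hmap := transfer hkc hk ν
  have hνlt : ν < bAlpha f p ε := by
    rw [hb, Ordinal.add_one_eq_succ]; exact Order.lt_succ ν
  obtain ⟨x, hx⟩ := derivSeq_nonempty_of_lt_bAlpha hνlt
  have hbg : bAlpha g q δ = ν + 1 :=
    bAlpha_eq_of_nonempty hg hδ hgr ⟨k x, hmap x hx⟩
  exact ⟨q, δ, hδ, hbg, k, hmap, correct_imp_hi hk, correct_imp_lo hk⟩

/-- The forward direction of the main theorem. -/
lemma forward {f g : Cantor → ℝ} (hg : BaireOne g)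
    {ν : Ordinal} (hgr : bourgainRank g = ν + 1)
    (hm : MReducible f g) :
    (TwoSided g ν ∨
       (OneSided f ν ∧ ¬ RightSided g ν ∧ ¬ LeftSided g ν) ∨
       (RightSided f ν ∧ RightSided g ν) ∨
       (LeftSided f ν ∧ LeftSided g ν)) := by
  by_cases h2g : TwoSided g ν
  · exact Or.inl h2g
  have hfone : OneSided f ν := by
    rintro ⟨p, ε, ⟨hε, hb, -⟩, hnIoi, hnIio⟩
    obtain ⟨q, δ, hδ, hbg, k, hmap, hhi, hlo⟩ := forward_pair hg hgr hm hε hb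
    obtain ⟨yhi, ⟨xhi, hxhi, rfl⟩, hyhi⟩ := Set.not_subset.1 hnIio
    obtain ⟨ylo, ⟨xlo, hxlo, rfl⟩, hylo⟩ := Set.not_subset.1 hnIoi
    have hxhi' : (p:ℝ)+(ε:ℝ) ≤ f xhi := not_lt.1 hyhi
    have hxlo' : f xlo ≤ (p:ℝ)-(ε:ℝ) := not_lt.1 hylo
    have hghi : (q:ℝ)+(δ:ℝ) ≤ g (k xhi) := hhi xhi hxhi'
    have hglo : g (k xlo) ≤ (q:ℝ)-(δ:ℝ) := hlo xlo hxlo'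
    have hδR : (0:ℝ) < ((δ:ℚ):ℝ) := by exact_mod_cast hδ
    refine h2g ⟨q, δ, ⟨hδ, hbg, ?_⟩, ?_, ?_⟩
    · intro hIoo
      have := hIoo ⟨k xhi, hmap xhi hxhi, rfl⟩
      rw [Set.mem_Ioo] at this
      linarith [this.2]
    · intro hIoi
      have := hIoi ⟨k xlo, hmap xlo hxlo, rfl⟩
      rw [Set.mem_Ioi] at this
      linarith
    · intro hIio
      have := hIio ⟨k xhi, hmap xhi hxhi, rfl⟩
      rw [Set.mem_Iio] at this
      linarith
  by_cases hRg : RightSided g ν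
  · refine Or.inr (Or.inr (Or.inl ⟨?_, hRg⟩))
    rintro p ε ⟨hε, hb, hnIoo⟩
    by_contra hnIoi
    obtain ⟨q, δ, hδ, hbg, k, hmap, hhi, hlo⟩ := forward_pair hg hgr hm hε hb
    obtain ⟨ylo, ⟨xlo, hxlo, rfl⟩, hylo⟩ := Set.not_subset.1 hnIoi
    have hxlo' : f xlo ≤ (p:ℝ)-(ε:ℝ) := not_lt.1 hylo
    have hglo : g (k xlo) ≤ (q:ℝ)-(δ:ℝ) := hlo xlo hxlo'
    have hδR : (0:ℝ) < ((δ:ℚ):ℝ) := by exact_mod_cast hδ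
    have hgmax : IsMaximalPair g ν q δ := by
      refine ⟨hδ, hbg, ?_⟩
      intro hIoo
      have := hIoo ⟨k xlo, hmap xlo hxlo, rfl⟩
      rw [Set.mem_Ioo] at this
      linarith [this.1]
    have := hRg q δ hgmax ⟨k xlo, hmap xlo hxlo, rfl⟩
    rw [Set.mem_Ioi] at this
    linarith
  by_cases hLg : LeftSided g ν
  · refine Or.inr (Or.inr (Or.inr ⟨?_, hLg⟩))
    rintro p ε ⟨hε, hb, hnIoo⟩
    by_contra hnIio
    obtain ⟨q, δ, hδ, hbg, k, hmap, hhi, hlo⟩ := forward_pair hg hgr hm hε hb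
    obtain ⟨yhi, ⟨xhi, hxhi, rfl⟩, hyhi⟩ := Set.not_subset.1 hnIio
    have hxhi' : (p:ℝ)+(ε:ℝ) ≤ f xhi := not_lt.1 hyhi
    have hghi : (q:ℝ)+(δ:ℝ) ≤ g (k xhi) := hhi xhi hxhi'
    have hδR : (0:ℝ) < ((δ:ℚ):ℝ) := by exact_mod_cast hδ
    have hgmax : IsMaximalPair g ν q δ := by
      refine ⟨hδ, hbg, ?_⟩
      intro hIoo
      have := hIoo ⟨k xhi, hmap xhi hxhi, rfl⟩
      rw [Set.mem_Ioo] at this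
      linarith [this.2]
    have := hLg q δ hgmax ⟨k xhi, hmap xhi hxhi, rfl⟩
    rw [Set.mem_Iio] at this
    linarith
  · exact Or.inr (Or.inl ⟨hfone, hRg, hLg⟩)

end DerivAux

namespace DerivAux

open CantorAux

attribute [local instance] Classical.propDecidable

/-- The transfer property of a candidate reduction on a set. -/
def Good (f g : Cantor → ℝ) (p ε q δ : ℚ) (k : Cantor → Cantor) (S : Set Cantor) : Prop :=
  ∀ A ∈ S, ((p:ℝ) + (ε:ℝ) ≤ f A → (q:ℝ) + (δ:ℝ) ≤ g (k A)) ∧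
           (f A ≤ (p:ℝ) - (ε:ℝ) → g (k A) ≤ (q:ℝ) - (δ:ℝ))

/-- The inductive statement for the main construction. -/
def LStatement (f g : Cantor → ℝ) (p ε q δ : ℚ) (μ : Ordinal) : Prop :=
  ∀ (C : Cantor) (n : ℕ), derivSeq f p ε μ ∩ cylAt C n = ∅ →
  ∀ B ∈ derivSeq g q δ μ, ∀ W : Set Cantor, IsOpen W → B ∈ W →
  ∃ k : Cantor → Cantor, Continuous k ∧ Good f g p ε q δ k (cylAt C n) ∧
    k '' cylAt C n ⊆ W

variable {f g : Cantor → ℝ} {p ε q δ : ℚ}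

/-- Construction on a cylinder where `f` is one-sided on the `μ`-th derivative. -/
lemma onesided_piece {μ : Ordinal} (hL : LStatement f g p ε q δ μ) (side : Bool)
    (C0 : Cantor) (n0 : ℕ)
    (himg : f '' (derivSeq f p ε μ ∩ cylAt C0 n0) ⊆
      (if side then Set.Iio ((p:ℝ) + (ε:ℝ)) else Set.Ioi ((p:ℝ) - (ε:ℝ))))
    (B : Cantor) (hB : B ∈ derivSeq g q δ μ)
    (hBval : if side then g B ≤ (q:ℝ) - (δ:ℝ) else (q:ℝ) + (δ:ℝ) ≤ g B)
    (W : Set Cantor) (hW : IsOpen W) (hBW : B ∈ W) :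
    ∃ k : Cantor → Cantor, Continuous k ∧ Good f g p ε q δ k (cylAt C0 n0) ∧
      k '' cylAt C0 n0 ⊆ W := by
  set P' : Set Cantor := derivSeq f p ε μ ∩ cylAt C0 n0 with hP'def
  by_cases hP' : P' = ∅
  · exact hL C0 n0 hP' B hB W hW hBW
  have hP'closed : IsClosed P' := (isClosed_derivSeq f p ε μ).inter (isClosed_cylAt C0 n0)
  have hP'ne : P'.Nonempty := Set.nonempty_iff_ne_empty.2 hP'
  -- existence of a disjoint cylinder around points off P'
  have hex : ∀ A : Cantor, A ∉ P' → ∃ m, cylAt A m ∩ P' = ∅ := by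
    intro A hA
    obtain ⟨m, hm⟩ := exists_cylAt_subset hP'closed.isOpen_compl (by exact hA)
    exact ⟨m, by rw [Set.eq_empty_iff_forall_notMem]; exact fun x hx => hm hx.1 hx.2⟩
  -- the canonical splitting depth
  set mf : Cantor → ℕ := fun A => if h : A ∈ P' then 0 else Nat.find (hex A h) with hmf
  have hmf_disj : ∀ A (hA : A ∉ P'), cylAt A (mf A) ∩ P' = ∅ := by
    intro A hA
    simp only [hmf, dif_neg hA]
    exact Nat.find_spec (hex A hA)
  have hmf_min : ∀ A (hA : A ∉ P'), ∀ j < mf A, cylAt A j ∩ P' ≠ ∅ := by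
    intro A hA j hj
    simp only [hmf, dif_neg hA] at hj
    simpa only [hmf, dif_neg hA] using Nat.find_min (hex A hA) hj
  -- invariance on pieces
  have hmf_inv : ∀ A (hA : A ∉ P') (A' : Cantor), A' ∈ cylAt A (mf A) →
      A' ∉ P' ∧ mf A' = mf A ∧ trunc A' (mf A') = trunc A (mf A) := by
    intro A hA A' hA'
    have hcyl : ∀ j ≤ mf A, cylAt A' j = cylAt A j := by
      intro j hj
      exact cylAt_eq_of_mem (cylAt_anti hj hA')
    have hA'P : A' ∉ P' := by
      intro hmem
      have : A' ∈ cylAt A (mf A) ∩ P' := ⟨hA', hmem⟩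
      rw [hmf_disj A hA] at this
      exact this
    have h1 : mf A' ≤ mf A := by
      by_contra hgt
      push_neg at hgt
      exact hmf_min A' hA'P (mf A) hgt (by rw [hcyl (mf A) le_rfl]; exact hmf_disj A hA)
    have h2 : mf A' = mf A := by
      rcases eq_or_lt_of_le h1 with h | h
      · exact h
      · exfalso
        exact hmf_min A hA (mf A') h
          (by rw [← hcyl (mf A') h1]; exact hmf_disj A' hA'P)
    refine ⟨hA'P, h2, ?_⟩
    rw [h2]
    exact trunc_eq_of_mem (cylAt_anti le_rfl (by rw [← h2] at hA'; exact cylAt_anti (le_of_eq h2.symm) hA'))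
  -- depth exceeds n0 inside the cylinder
  have hmf_gt : ∀ A, A ∈ cylAt C0 n0 → (hA : A ∉ P') → n0 < mf A := by
    intro A hAc hA
    by_contra hle
    push_neg at hle
    have h1 : cylAt A n0 = cylAt C0 n0 := cylAt_eq_of_mem hAc
    have h2 : P' ⊆ cylAt A (mf A) := by
      intro x hx
      have hx2 : x ∈ cylAt C0 n0 := hx.2
      rw [← h1] at hx2
      exact cylAt_anti hle hx2
    obtain ⟨x, hx⟩ := hP'ne
    have : x ∈ cylAt A (mf A) ∩ P' := ⟨h2 hx, hx⟩
    rw [hmf_disj A hA] at this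
    exact this
  -- the piece maps, via global choice
  have hKK : ∀ (C : Cantor) (ℓ : ℕ), ∃ kp : Cantor → Cantor, Continuous kp ∧
      (derivSeq f p ε μ ∩ cylAt C ℓ = ∅ →
        (Good f g p ε q δ kp (cylAt C ℓ) ∧ kp '' cylAt C ℓ ⊆ W ∩ cylAt B ℓ)) := by
    intro C ℓ
    by_cases h : derivSeq f p ε μ ∩ cylAt C ℓ = ∅
    · obtain ⟨kp, h1, h2, h3⟩ := hL C ℓ h B hB (W ∩ cylAt B ℓ)
        (hW.inter (isOpen_cylAt B ℓ)) ⟨hBW, self_mem_cylAt B ℓ⟩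
      exact ⟨kp, h1, fun _ => ⟨h2, h3⟩⟩
    · exact ⟨fun _ => B, continuous_const, fun hc => absurd hc h⟩
  choose KK hKKc hKKgood using hKK
  -- the glued map
  set k : Cantor → Cantor := fun A => if A ∈ P' then B else KK (trunc A (mf A)) (mf A) A
    with hkdef
  -- piece disjointness for relevant points
  have hpiece : ∀ A, A ∈ cylAt C0 n0 → (hA : A ∉ P') →
      derivSeq f p ε μ ∩ cylAt (trunc A (mf A)) (mf A) = ∅ := by
    intro A hAc hA
    rw [cylAt_trunc]
    have hsub : cylAt A (mf A) ⊆ cylAt C0 n0 := by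
      have h1 : cylAt A n0 = cylAt C0 n0 := cylAt_eq_of_mem hAc
      rw [← h1]
      exact cylAt_anti (le_of_lt (hmf_gt A hAc hA))
    rw [Set.eq_empty_iff_forall_notMem]
    intro x ⟨hx1, hx2⟩
    have : x ∈ cylAt A (mf A) ∩ P' := ⟨hx2, hx1, hsub hx2⟩
    rw [hmf_disj A hA] at this
    exact this
  refine ⟨k, ?_, ?_, ?_⟩
  · -- continuity
    rw [continuous_iff_continuousAt]
    intro A
    by_cases hA : A ∈ P'
    · -- boundary point: converge to B
      have hkA : k A = B := by simp only [hkdef, if_pos hA]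
      rw [ContinuousAt, hkA, tendsto_pi_nhds]
      intro i
      rw [show nhds (B i) = pure (B i) by rw [← nhds_discrete Bool], Filter.tendsto_pure]
      have hnb : cylAt A (max (i+1) n0) ∈ nhds A := cylAt_mem_nhds A _
      filter_upwards [hnb] with A' hA'
      by_cases hA'P : A' ∈ P'
      · simp only [hkdef, if_pos hA'P]
      · have hA'c : A' ∈ cylAt C0 n0 := by
          have h1 : A' ∈ cylAt A n0 := cylAt_anti (le_max_right _ _) hA'
          rw [cylAt_eq_of_mem hA.2] at h1
          exact h1
        have hgt : i < mf A' := by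
          by_contra hle'
          push_neg at hle'
          have hAmem : A ∈ cylAt A' (mf A') :=
            cylAt_anti (le_trans (Nat.le_succ_of_le hle') (le_max_left _ _)) (mem_cylAt_symm hA')
          have : A ∈ cylAt A' (mf A') ∩ P' := ⟨hAmem, hA⟩
          rw [hmf_disj A' hA'P] at this
          exact this
        simp only [hkdef, if_neg hA'P]
        have hc := hpiece A' hA'c hA'P
        have hmem := (hKKgood (trunc A' (mf A')) (mf A') hc).2
          ⟨A', by rw [cylAt_trunc]; exact self_mem_cylAt A' (mf A'), rfl⟩
        exact hmem.2 i hgt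
    · -- interior point: locally equal to a piece map
      have hev : k =ᶠ[nhds A] KK (trunc A (mf A)) (mf A) := by
        filter_upwards [cylAt_mem_nhds A (mf A)] with A' hA'
        obtain ⟨hA'P, hm, ht⟩ := hmf_inv A hA A' hA'
        simp only [hkdef, if_neg hA'P]
        rw [ht, hm]
      exact (ContinuousAt.congr ((hKKc (trunc A (mf A)) (mf A)).continuousAt) hev.symm)
  · -- goodness
    intro A hAc
    by_cases hA : A ∈ P'
    · have hkA : k A = B := by simp only [hkdef, if_pos hA]
      rw [hkA]
      cases side with
      | true =>
        simp only [reduceIte] at himg hBval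
        constructor
        · intro hge
          exfalso
          have := himg ⟨A, hA, rfl⟩
          rw [Set.mem_Iio] at this
          exact absurd hge (not_le.2 this)
        · intro _
          exact hBval
      | false =>
        simp only [Bool.false_eq_true, reduceIte] at himg hBval
        constructor
        · intro _
          exact hBval
        · intro hle
          exfalso
          have := himg ⟨A, hA, rfl⟩
          rw [Set.mem_Ioi] at this
          exact absurd hle (not_le.2 this)
    · have hc := hpiece A hAc hA
      have hgood := (hKKgood (trunc A (mf A)) (mf A) hc).1
      have hmem : A ∈ cylAt (trunc A (mf A)) (mf A) := by
        rw [cylAt_trunc]; exact self_mem_cylAt A (mf A)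
      have := hgood A hmem
      simpa only [hkdef, if_neg hA] using this
  · -- range
    rintro y ⟨A, hAc, rfl⟩
    by_cases hA : A ∈ P'
    · simpa only [hkdef, if_pos hA] using hBW
    · have hc := hpiece A hAc hA
      have himgsub := (hKKgood (trunc A (mf A)) (mf A) hc).2
      have hmem : A ∈ cylAt (trunc A (mf A)) (mf A) := by
        rw [cylAt_trunc]; exact self_mem_cylAt A (mf A)
      have := himgsub ⟨A, hmem, rfl⟩
      simp only [hkdef, if_neg hA]
      exact this.1

end DerivAux

namespace DerivAux

open CantorAux

variable {f g : Cantor → ℝ} {p ε q δ : ℚ}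

/-- The main construction lemma, by transfinite induction. -/
lemma LemmaL_all : ∀ μ : Ordinal, LStatement f g p ε q δ μ := by
  intro μ
  induction μ using Ordinal.induction with
  | h μ ih =>
    rcases Ordinal.zero_or_succ_or_isSuccLimit μ with h0 | ⟨μ', rfl⟩ | hlim
    · subst h0
      intro C n hdisj B hB W hW hBW
      exfalso
      rw [derivSeq_zero, Set.univ_inter] at hdisj
      rw [Set.eq_empty_iff_forall_notMem] at hdisj
      exact hdisj C (self_mem_cylAt C n)
    · -- successor case
      rw [← Ordinal.add_one_eq_succ]
      have hμ' : μ' < μ' + 1 := by rw [Ordinal.add_one_eq_succ]; exact Order.lt_succ μ'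
      have hLμ' : LStatement f g p ε q δ μ' := by
        rw [← Ordinal.add_one_eq_succ] at ih
        exact ih μ' hμ'
      intro C n hdisj B hB W hW hBW
      obtain ⟨⟨Bp, hBp, hBpval⟩, ⟨Bm, hBm, hBmval⟩⟩ := richness hB hW hBW
      have hBμ' : B ∈ derivSeq g q δ μ' := derivSeq_succ_subset g q δ μ' hB
      -- pointwise: a good cylinder around each point
      have hcover : ∀ A : ↥(cylAt C n), ∃ mm : ℕ,
          (derivSeq f p ε μ' ∩ cylAt A.1 mm = ∅) ∨
          (f '' (derivSeq f p ε μ' ∩ cylAt A.1 mm) ⊆ Set.Iio ((p:ℝ)+(ε:ℝ))) ∨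
          (f '' (derivSeq f p ε μ' ∩ cylAt A.1 mm) ⊆ Set.Ioi ((p:ℝ)-(ε:ℝ))) := by
        rintro ⟨A, hAc⟩
        have hA1 : A ∉ derivSeq f p ε (μ' + 1) := by
          intro hmem
          rw [Set.eq_empty_iff_forall_notMem] at hdisj
          exact hdisj A ⟨hmem, hAc⟩
        by_cases hA2 : A ∈ derivSeq f p ε μ'
        · have hexU : ∃ U : Set Cantor, IsOpen U ∧ A ∈ U ∧
              (f '' (derivSeq f p ε μ' ∩ U) ⊆ Set.Iio ((p:ℝ)+(ε:ℝ)) ∨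
               f '' (derivSeq f p ε μ' ∩ U) ⊆ Set.Ioi ((p:ℝ)-(ε:ℝ))) := by
            by_contra hne
            exact hA1 (mem_derivSeq_succ_iff.2 ⟨hA2, hne⟩)
          obtain ⟨U, hUopen, hAU, hside⟩ := hexU
          obtain ⟨mm, hmm⟩ := exists_cylAt_subset hUopen hAU
          refine ⟨mm, ?_⟩
          have hsub : derivSeq f p ε μ' ∩ cylAt A mm ⊆ derivSeq f p ε μ' ∩ U :=
            Set.inter_subset_inter_right _ hmm
          rcases hside with hs | hs
          · exact Or.inr (Or.inl ((Set.image_mono hsub).trans hs))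
          · exact Or.inr (Or.inr ((Set.image_mono hsub).trans hs))
        · obtain ⟨mm, hmm⟩ := exists_cylAt_subset (isClosed_derivSeq f p ε μ').isOpen_compl hA2
          refine ⟨mm, Or.inl ?_⟩
          rw [Set.eq_empty_iff_forall_notMem]
          rintro x ⟨hx1, hx2⟩
          exact hmm hx2 hx1
      choose mm hmm using hcover
      -- compactness: a uniform depth M
      have hcpt : IsCompact (cylAt C n) := (isClosed_cylAt C n).isCompact
      obtain ⟨t, ht⟩ := hcpt.elim_finite_subcover
        (fun A : ↥(cylAt C n) => cylAt A.1 (mm A))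
        (fun A => isOpen_cylAt A.1 (mm A))
        (fun A hA => Set.mem_iUnion.2 ⟨⟨A, hA⟩, self_mem_cylAt A (mm ⟨A, hA⟩)⟩)
      set M : ℕ := max n (t.sup mm) with hMdef
      have hMn : n ≤ M := le_max_left _ _
      have hM : ∀ A : ↥(cylAt C n), A.1 ∈ cylAt C n → True := fun _ _ => trivial
      -- transfer the disjunction to depth M
      have hprop : ∀ A : Cantor, A ∈ cylAt C n →
          (derivSeq f p ε μ' ∩ cylAt A M = ∅) ∨
          (f '' (derivSeq f p ε μ' ∩ cylAt A M) ⊆ Set.Iio ((p:ℝ)+(ε:ℝ))) ∨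
          (f '' (derivSeq f p ε μ' ∩ cylAt A M) ⊆ Set.Ioi ((p:ℝ)-(ε:ℝ))) := by
        intro A hAc
        obtain ⟨i, hit, hAi⟩ := Set.mem_iUnion₂.1 (ht hAc)
        have hMi : mm i ≤ M := le_trans (Finset.le_sup hit) (le_max_right _ _)
        have hsub : cylAt A M ⊆ cylAt i.1 (mm i) := by
          have h1 : cylAt A (mm i) = cylAt i.1 (mm i) := cylAt_eq_of_mem hAi
          rw [← h1]
          exact cylAt_anti hMi
        have hsub2 : derivSeq f p ε μ' ∩ cylAt A M ⊆ derivSeq f p ε μ' ∩ cylAt i.1 (mm i) :=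
          Set.inter_subset_inter_right _ hsub
        rcases hmm i with hd | hd | hd
        · left
          rw [Set.eq_empty_iff_forall_notMem]
          intro x hx
          rw [Set.eq_empty_iff_forall_notMem] at hd
          exact hd x (hsub2 hx)
        · exact Or.inr (Or.inl ((Set.image_mono hsub2).trans hd))
        · exact Or.inr (Or.inr ((Set.image_mono hsub2).trans hd))
      -- per-piece maps
      have hpieces : ∀ A : Cantor, ∃ kp : Cantor → Cantor, Continuous kp ∧
          (A ∈ cylAt C n → Good f g p ε q δ kp (cylAt A M) ∧ kp '' cylAt A M ⊆ W) := by
        intro A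
        by_cases hAc : A ∈ cylAt C n
        · rcases hprop A hAc with hd | hd | hd
          · obtain ⟨kp, h1, h2, h3⟩ := hLμ' A M hd B hBμ' W hW hBW
            exact ⟨kp, h1, fun _ => ⟨h2, h3⟩⟩
          · obtain ⟨kp, h1, h2, h3⟩ := onesided_piece hLμ' true A M
              (by simp only [reduceIte]; exact hd) Bm hBm.1
              (by simp only [reduceIte]; exact hBmval) W hW hBm.2
            exact ⟨kp, h1, fun _ => ⟨h2, h3⟩⟩
          · obtain ⟨kp, h1, h2, h3⟩ := onesided_piece hLμ' false A M
              (by simp only [Bool.false_eq_true, reduceIte]; exact hd) Bp hBp.1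
              (by simp only [Bool.false_eq_true, reduceIte]; exact hBpval) W hW hBp.2
            exact ⟨kp, h1, fun _ => ⟨h2, h3⟩⟩
        · exact ⟨fun _ => B, continuous_const, fun hc => absurd hc hAc⟩
      choose K hKc hKgood using hpieces
      refine ⟨fun A => K (trunc A M) A, ?_, ?_, ?_⟩
      · rw [continuous_iff_continuousAt]
        intro A
        have hev : (fun A' => K (trunc A' M) A') =ᶠ[nhds A] K (trunc A M) := by
          filter_upwards [cylAt_mem_nhds A M] with A' hA'
          rw [trunc_eq_of_mem hA']
        exact ContinuousAt.congr ((hKc (trunc A M)).continuousAt) hev.symm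
      · intro A hAc
        have htm : trunc A M ∈ cylAt C n := by
          intro i hi
          rw [trunc, if_pos (lt_of_lt_of_le hi hMn)]
          exact hAc i hi
        have hAmem : A ∈ cylAt (trunc A M) M := by
          rw [cylAt_trunc]; exact self_mem_cylAt A M
        exact (hKgood (trunc A M) htm).1 A hAmem
      · rintro y ⟨A, hAc, rfl⟩
        have htm : trunc A M ∈ cylAt C n := by
          intro i hi
          rw [trunc, if_pos (lt_of_lt_of_le hi hMn)]
          exact hAc i hi
        have hAmem : A ∈ cylAt (trunc A M) M := by
          rw [cylAt_trunc]; exact self_mem_cylAt A M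
        exact (hKgood (trunc A M) htm).2 ⟨A, hAmem, rfl⟩
    · -- limit case
      intro C n hdisj B hB W hW hBW
      haveI : Nonempty {μ' : Ordinal // μ' < μ} := ⟨⟨0, hlim.pos⟩⟩
      have hcpt : IsCompact (cylAt C n) := (isClosed_cylAt C n).isCompact
      have hint : (cylAt C n ∩ ⋂ (μ' : {μ' : Ordinal // μ' < μ}), derivSeq f p ε μ'.1) = ∅ := by
        rw [← derivSeq_limit f p ε hlim, Set.inter_comm]
        exact hdisj
      obtain ⟨μ', hμ'⟩ := hcpt.elim_directed_family_closed
        (fun μ' : {μ' : Ordinal // μ' < μ} => derivSeq f p ε μ'.1)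
        (fun μ' => isClosed_derivSeq f p ε μ'.1) hint
        (by
          intro a b
          rcases le_total a.1 b.1 with h | h
          · exact ⟨b, derivSeq_anti f p ε h, subset_rfl⟩
          · exact ⟨a, subset_rfl, derivSeq_anti f p ε h⟩)
      rw [Set.inter_comm] at hμ'
      exact ih μ'.1 μ'.2 C n hμ' B (derivSeq_anti g q δ (le_of_lt μ'.2) hB) W hW hBW

end DerivAux

namespace DerivAux

open CantorAux

attribute [local instance] Classical.propDecidable

variable {f g : Cantor → ℝ} {p ε q δ : ℚ}

/-- Top-level construction when both one-sided resources are available in `g`. -/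
lemma top_twosided {ν : Ordinal} (hL : LStatement f g p ε q δ ν) (C : Cantor) (n : ℕ)
    (hdisj : derivSeq f p ε (ν+1) ∩ cylAt C n = ∅)
    (Bp : Cantor) (hBp : Bp ∈ derivSeq g q δ ν) (hBpval : (q:ℝ)+(δ:ℝ) ≤ g Bp)
    (Bm : Cantor) (hBm : Bm ∈ derivSeq g q δ ν) (hBmval : g Bm ≤ (q:ℝ)-(δ:ℝ)) :
    ∃ k : Cantor → Cantor, Continuous k ∧ Good f g p ε q δ k (cylAt C n) := by
  have hcover : ∀ A : ↥(cylAt C n), ∃ mm : ℕ,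
      (derivSeq f p ε ν ∩ cylAt A.1 mm = ∅) ∨
      (f '' (derivSeq f p ε ν ∩ cylAt A.1 mm) ⊆ Set.Iio ((p:ℝ)+(ε:ℝ))) ∨
      (f '' (derivSeq f p ε ν ∩ cylAt A.1 mm) ⊆ Set.Ioi ((p:ℝ)-(ε:ℝ))) := by
    rintro ⟨A, hAc⟩
    have hA1 : A ∉ derivSeq f p ε (ν + 1) := by
      intro hmem
      rw [Set.eq_empty_iff_forall_notMem] at hdisj
      exact hdisj A ⟨hmem, hAc⟩
    by_cases hA2 : A ∈ derivSeq f p ε ν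
    · have hexU : ∃ U : Set Cantor, IsOpen U ∧ A ∈ U ∧
          (f '' (derivSeq f p ε ν ∩ U) ⊆ Set.Iio ((p:ℝ)+(ε:ℝ)) ∨
           f '' (derivSeq f p ε ν ∩ U) ⊆ Set.Ioi ((p:ℝ)-(ε:ℝ))) := by
        by_contra hne
        exact hA1 (mem_derivSeq_succ_iff.2 ⟨hA2, hne⟩)
      obtain ⟨U, hUopen, hAU, hside⟩ := hexU
      obtain ⟨mm, hmm⟩ := exists_cylAt_subset hUopen hAU
      refine ⟨mm, ?_⟩
      have hsub : derivSeq f p ε ν ∩ cylAt A mm ⊆ derivSeq f p ε ν ∩ U :=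
        Set.inter_subset_inter_right _ hmm
      rcases hside with hs | hs
      · exact Or.inr (Or.inl ((Set.image_mono hsub).trans hs))
      · exact Or.inr (Or.inr ((Set.image_mono hsub).trans hs))
    · obtain ⟨mm, hmm⟩ := exists_cylAt_subset (isClosed_derivSeq f p ε ν).isOpen_compl hA2
      refine ⟨mm, Or.inl ?_⟩
      rw [Set.eq_empty_iff_forall_notMem]
      rintro x ⟨hx1, hx2⟩
      exact hmm hx2 hx1
  choose mm hmm using hcover
  have hcpt : IsCompact (cylAt C n) := (isClosed_cylAt C n).isCompact
  obtain ⟨t, ht⟩ := hcpt.elim_finite_subcover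
    (fun A : ↥(cylAt C n) => cylAt A.1 (mm A))
    (fun A => isOpen_cylAt A.1 (mm A))
    (fun A hA => Set.mem_iUnion.2 ⟨⟨A, hA⟩, self_mem_cylAt A (mm ⟨A, hA⟩)⟩)
  set M : ℕ := max n (t.sup mm) with hMdef
  have hMn : n ≤ M := le_max_left _ _
  have hprop : ∀ A : Cantor, A ∈ cylAt C n →
      (derivSeq f p ε ν ∩ cylAt A M = ∅) ∨
      (f '' (derivSeq f p ε ν ∩ cylAt A M) ⊆ Set.Iio ((p:ℝ)+(ε:ℝ))) ∨
      (f '' (derivSeq f p ε ν ∩ cylAt A M) ⊆ Set.Ioi ((p:ℝ)-(ε:ℝ))) := by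
    intro A hAc
    obtain ⟨i, hit, hAi⟩ := Set.mem_iUnion₂.1 (ht hAc)
    have hMi : mm i ≤ M := le_trans (Finset.le_sup hit) (le_max_right _ _)
    have hsub : cylAt A M ⊆ cylAt i.1 (mm i) := by
      have h1 : cylAt A (mm i) = cylAt i.1 (mm i) := cylAt_eq_of_mem hAi
      rw [← h1]
      exact cylAt_anti hMi
    have hsub2 : derivSeq f p ε ν ∩ cylAt A M ⊆ derivSeq f p ε ν ∩ cylAt i.1 (mm i) :=
      Set.inter_subset_inter_right _ hsub
    rcases hmm i with hd | hd | hd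
    · left
      rw [Set.eq_empty_iff_forall_notMem]
      intro x hx
      rw [Set.eq_empty_iff_forall_notMem] at hd
      exact hd x (hsub2 hx)
    · exact Or.inr (Or.inl ((Set.image_mono hsub2).trans hd))
    · exact Or.inr (Or.inr ((Set.image_mono hsub2).trans hd))
  have hpieces : ∀ A : Cantor, ∃ kp : Cantor → Cantor, Continuous kp ∧
      (A ∈ cylAt C n → Good f g p ε q δ kp (cylAt A M)) := by
    intro A
    by_cases hAc : A ∈ cylAt C n
    · rcases hprop A hAc with hd | hd | hd
      · obtain ⟨kp, h1, h2, -⟩ := hL A M hd Bp hBp Set.univ isOpen_univ trivial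
        exact ⟨kp, h1, fun _ => h2⟩
      · obtain ⟨kp, h1, h2, -⟩ := onesided_piece hL true A M
          (by simp only [reduceIte]; exact hd) Bm hBm
          (by simp only [reduceIte]; exact hBmval) Set.univ isOpen_univ trivial
        exact ⟨kp, h1, fun _ => h2⟩
      · obtain ⟨kp, h1, h2, -⟩ := onesided_piece hL false A M
          (by simp only [Bool.false_eq_true, reduceIte]; exact hd) Bp hBp
          (by simp only [Bool.false_eq_true, reduceIte]; exact hBpval) Set.univ isOpen_univ trivial
        exact ⟨kp, h1, fun _ => h2⟩
    · exact ⟨fun _ => Bp, continuous_const, fun hc => absurd hc hAc⟩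
  choose K hKc hKgood using hpieces
  refine ⟨fun A => K (trunc A M) A, ?_, ?_⟩
  · rw [continuous_iff_continuousAt]
    intro A
    have hev : (fun A' => K (trunc A' M) A') =ᶠ[nhds A] K (trunc A M) := by
      filter_upwards [cylAt_mem_nhds A M] with A' hA'
      rw [trunc_eq_of_mem hA']
    exact ContinuousAt.congr ((hKc (trunc A M)).continuousAt) hev.symm
  · intro A hAc
    have htm : trunc A M ∈ cylAt C n := by
      intro i hi
      rw [trunc, if_pos (lt_of_lt_of_le hi hMn)]
      exact hAc i hi
    have hAmem : A ∈ cylAt (trunc A M) M := by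
      rw [cylAt_trunc]; exact self_mem_cylAt A M
    exact hKgood (trunc A M) htm A hAmem

lemma good_to_correct {k : Cantor → Cantor} (hk : Good f g p ε q δ k Set.univ) :
    ∀ A b, CorrectAnswer g (k A) q δ b → CorrectAnswer f A p ε b := by
  intro A b hb
  rcases hb with ⟨rfl, hlt⟩ | ⟨rfl, hgt⟩
  · left
    refine ⟨rfl, ?_⟩
    by_contra h
    push_neg at h
    exact absurd hlt (not_lt.2 ((hk A trivial).1 h))
  · right
    refine ⟨rfl, ?_⟩
    by_contra h
    push_neg at h
    exact absurd hgt (not_lt.2 ((hk A trivial).2 h))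

end DerivAux

namespace DerivAux

open CantorAux

/-- The backward direction of the main theorem. -/
lemma backward {f g : Cantor → ℝ} (hf : BaireOne f) (hg : BaireOne g)
    {ν : Ordinal} (hfr : bourgainRank f = ν + 1) (hgr : bourgainRank g = ν + 1)
    (hRHS : TwoSided g ν ∨
       (OneSided f ν ∧ ¬ RightSided g ν ∧ ¬ LeftSided g ν) ∨
       (RightSided f ν ∧ RightSided g ν) ∨
       (LeftSided f ν ∧ LeftSided g ν)) : MReducible f g := by
  intro p ε hε
  have hterm := derivSeq_bAlpha_empty hf hε (p := p) (ε := ε)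
  have hble : bAlpha f p ε ≤ ν + 1 := hfr ▸ bAlpha_le_bourgainRank f hε
  set C0 : Cantor := fun _ => false with hC0
  have hcyl0 : cylAt C0 0 = Set.univ := cylAt_zero C0
  rcases lt_or_eq_of_le hble with hlt | heq
  · -- the pair (p,ε) has low rank: no sidedness needed
    obtain ⟨q, δ, hδ, hbq⟩ := rank_attained hgr
    obtain ⟨B, hB⟩ : (derivSeq g q δ (bAlpha f p ε)).Nonempty := by
      apply derivSeq_nonempty_of_lt_bAlpha
      rw [hbq]; exact hlt
    have hdisj : derivSeq f p ε (bAlpha f p ε) ∩ cylAt C0 0 = ∅ := by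
      rw [hterm]; exact Set.empty_inter _
    obtain ⟨k, hkc, hkgood, -⟩ :=
      LemmaL_all (bAlpha f p ε) C0 0 hdisj B hB Set.univ isOpen_univ trivial
    rw [hcyl0] at hkgood
    exact ⟨q, δ, hδ, k, hkc, good_to_correct hkgood⟩
  · -- the pair (p,ε) has top rank ν+1
    have hν1 : derivSeq f p ε (ν+1) = ∅ := by rw [← heq]; exact hterm
    have hνne : (derivSeq f p ε ν).Nonempty := by
      apply derivSeq_nonempty_of_lt_bAlpha
      rw [heq, Ordinal.add_one_eq_succ]
      exact Order.lt_succ ν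
    -- helper: finish from a one-sided construction
    have finish_lo : ∀ q' δ' : ℚ, 0 < δ' →
        (f '' derivSeq f p ε ν ⊆ Set.Iio ((p:ℝ)+(ε:ℝ))) →
        ∀ B ∈ derivSeq g q' δ' ν, g B ≤ (q':ℝ) - (δ':ℝ) →
        ∃ q δ : ℚ, 0 < δ ∧ ∃ k : Cantor → Cantor, Continuous k ∧
          ∀ A b, CorrectAnswer g (k A) q δ b → CorrectAnswer f A p ε b := by
      intro q' δ' hδ' himg B hB hBval
      have himg' : f '' (derivSeq f p ε ν ∩ cylAt C0 0) ⊆ Set.Iio ((p:ℝ)+(ε:ℝ)) := by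
        rw [hcyl0, Set.inter_univ]; exact himg
      obtain ⟨k, hkc, hkgood, -⟩ := onesided_piece (LemmaL_all ν) true C0 0
        (by simp only [reduceIte]; exact himg') B hB
        (by simp only [reduceIte]; exact hBval) Set.univ isOpen_univ trivial
      rw [hcyl0] at hkgood
      exact ⟨q', δ', hδ', k, hkc, good_to_correct hkgood⟩
    have finish_hi : ∀ q' δ' : ℚ, 0 < δ' →
        (f '' derivSeq f p ε ν ⊆ Set.Ioi ((p:ℝ)-(ε:ℝ))) →
        ∀ B ∈ derivSeq g q' δ' ν, (q':ℝ) + (δ':ℝ) ≤ g B →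
        ∃ q δ : ℚ, 0 < δ ∧ ∃ k : Cantor → Cantor, Continuous k ∧
          ∀ A b, CorrectAnswer g (k A) q δ b → CorrectAnswer f A p ε b := by
      intro q' δ' hδ' himg B hB hBval
      have himg' : f '' (derivSeq f p ε ν ∩ cylAt C0 0) ⊆ Set.Ioi ((p:ℝ)-(ε:ℝ)) := by
        rw [hcyl0, Set.inter_univ]; exact himg
      obtain ⟨k, hkc, hkgood, -⟩ := onesided_piece (LemmaL_all ν) false C0 0
        (by simp only [Bool.false_eq_true, reduceIte]; exact himg') B hB
        (by simp only [Bool.false_eq_true, reduceIte]; exact hBval) Set.univ isOpen_univ trivial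
      rw [hcyl0] at hkgood
      exact ⟨q', δ', hδ', k, hkc, good_to_correct hkgood⟩
    rcases hRHS with h2g | ⟨h1f, hnRg, hnLg⟩ | ⟨hRf, hRg⟩ | ⟨hLf, hLg⟩
    · -- g two-sided
      obtain ⟨q, δ, ⟨hδ, hbq, hnIoo⟩, hnIoi, hnIio⟩ := h2g
      obtain ⟨yp, ⟨Bp, hBp, rfl⟩, hyp⟩ := Set.not_subset.1 hnIio
      obtain ⟨ym, ⟨Bm, hBm, rfl⟩, hym⟩ := Set.not_subset.1 hnIoi
      have hBpval : (q:ℝ)+(δ:ℝ) ≤ g Bp := not_lt.1 hyp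
      have hBmval : g Bm ≤ (q:ℝ)-(δ:ℝ) := not_lt.1 hym
      by_cases hIio : f '' derivSeq f p ε ν ⊆ Set.Iio ((p:ℝ)+(ε:ℝ))
      · exact finish_lo q δ hδ hIio Bm hBm hBmval
      by_cases hIoi : f '' derivSeq f p ε ν ⊆ Set.Ioi ((p:ℝ)-(ε:ℝ))
      · exact finish_hi q δ hδ hIoi Bp hBp hBpval
      · have hdisj : derivSeq f p ε (ν+1) ∩ cylAt C0 0 = ∅ := by
          rw [hν1]; exact Set.empty_inter _
        obtain ⟨k, hkc, hkgood⟩ := top_twosided (LemmaL_all ν) C0 0 hdisj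
          Bp hBp hBpval Bm hBm hBmval
        rw [hcyl0] at hkgood
        exact ⟨q, δ, hδ, k, hkc, good_to_correct hkgood⟩
    · -- f one-sided, g neither right- nor left-sided
      have hside : (f '' derivSeq f p ε ν ⊆ Set.Iio ((p:ℝ)+(ε:ℝ))) ∨
          (f '' derivSeq f p ε ν ⊆ Set.Ioi ((p:ℝ)-(ε:ℝ))) := by
        by_contra hc
        push_neg at hc
        refine h1f ⟨p, ε, ⟨hε, heq, ?_⟩, hc.2, hc.1⟩
        intro hIoo
        exact hc.1 (hIoo.trans Set.Ioo_subset_Iio_self)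
      rcases hside with hIio | hIoi
      · -- need a low resource from ¬ RightSided g
        rw [RightSided] at hnRg
        push_neg at hnRg
        obtain ⟨q, δ, hqmax, hnsub⟩ := hnRg
        obtain ⟨y, ⟨Bm, hBm, rfl⟩, hy⟩ := Set.not_subset.1 hnsub
        exact finish_lo q δ hqmax.1 hIio Bm hBm (not_lt.1 hy)
      · rw [LeftSided] at hnLg
        push_neg at hnLg
        obtain ⟨q, δ, hqmax, hnsub⟩ := hnLg
        obtain ⟨y, ⟨Bp, hBp, rfl⟩, hy⟩ := Set.not_subset.1 hnsub
        exact finish_hi q δ hqmax.1 hIoi Bp hBp (not_lt.1 hy)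
    · -- both right-sided
      have hIoi : f '' derivSeq f p ε ν ⊆ Set.Ioi ((p:ℝ)-(ε:ℝ)) := by
        by_cases hIoo : f '' derivSeq f p ε ν ⊆
            Set.Ioo ((p:ℝ)-(ε:ℝ)) ((p:ℝ)+(ε:ℝ))
        · exact hIoo.trans Set.Ioo_subset_Ioi_self
        · exact hRf p ε ⟨hε, heq, hIoo⟩
      obtain ⟨q, δ, hqmax⟩ := exists_maximal_pair hg hgr
      have hsub := hRg q δ hqmax
      obtain ⟨y, ⟨Bp, hBp, rfl⟩, hy⟩ := Set.not_subset.1 hqmax.2.2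
      have h1 : (q:ℝ) - (δ:ℝ) < g Bp := hsub ⟨Bp, hBp, rfl⟩
      have h2 : (q:ℝ) + (δ:ℝ) ≤ g Bp := by
        rw [Set.mem_Ioo] at hy
        push_neg at hy
        exact hy h1
      exact finish_hi q δ hqmax.1 hIoi Bp hBp h2
    · -- both left-sided
      have hIio : f '' derivSeq f p ε ν ⊆ Set.Iio ((p:ℝ)+(ε:ℝ)) := by
        by_cases hIoo : f '' derivSeq f p ε ν ⊆
            Set.Ioo ((p:ℝ)-(ε:ℝ)) ((p:ℝ)+(ε:ℝ))
        · exact hIoo.trans Set.Ioo_subset_Iio_self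
        · exact hLf p ε ⟨hε, heq, hIoo⟩
      obtain ⟨q, δ, hqmax⟩ := exists_maximal_pair hg hgr
      have hsub := hLg q δ hqmax
      obtain ⟨y, ⟨Bm, hBm, rfl⟩, hy⟩ := Set.not_subset.1 hqmax.2.2
      have h1 : g Bm < (q:ℝ) + (δ:ℝ) := hsub ⟨Bm, hBm, rfl⟩
      have h2 : g Bm ≤ (q:ℝ) - (δ:ℝ) := by
        rw [Set.mem_Ioo] at hy
        push_neg at hy
        by_contra hcon
        push_neg at hcon
        exact absurd h1 (not_lt.2 (hy hcon))
      exact finish_lo q δ hqmax.1 hIio Bm hBm h2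

end DerivAux

/-- For Baire 1 functions `f, g` with `|f|_α = |g|_α = ν + 1` a successor ordinal,
`f ≤_m g` iff: `g` is two-sided, or `f` is one-sided and `g` is neither right- nor
left-sided, or `f` and `g` are both right-sided, or both left-sided. -/
theorem mReducible_iff_sided (f g : Cantor → ℝ) (hf : BaireOne f) (hg : BaireOne g)
    (ν : Ordinal) (hfr : bourgainRank f = ν + 1) (hgr : bourgainRank g = ν + 1) :
    MReducible f g ↔
      (TwoSided g ν ∨
       (OneSided f ν ∧ ¬ RightSided g ν ∧ ¬ LeftSided g ν) ∨
       (RightSided f ν ∧ RightSided g ν) ∨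
       (LeftSided f ν ∧ LeftSided g ν)) :=
  ⟨fun hm => DerivAux.forward hg hgr hm, fun hRHS => DerivAux.backward hf hg hfr hgr hRHS⟩
end
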